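/- arXiv:2604.17490 — 7 statements merged into one kernel-verified Lean document; each statement's English description precedes it below -/
import Mathlib

section
/- Given probabilities q_1,...,q_n in [0,1] with sum_{i=1}^n q_i <= n-1, there exist non-negative real coefficients p_I indexed by subsets I of {1,...,n} with 2 <= |I| <= n-1, such that for every i, the sum of p_I over all I containing i is at most q_i, and sum over all I of (|I|-1) p_I >= sum_{i=1}^n q_i - 1. -/
open Finset

private lemma helperf {N : ℕ} {ι : Type*} (s : Finset (Finset (Fin N))) (t : Finset ι)
    (g : ι → Finset (Fin N)) (w : ι → ℝ) (f : Finset (Fin N) → ℝ) :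
    ∑ I ∈ s, f I * (∑ x ∈ t, if I = g x then w x else 0)
      = ∑ x ∈ t, if g x ∈ s then f (g x) * w x else 0 := by
  have : ∀ I ∈ s, f I * (∑ x ∈ t, if I = g x then w x else 0)
      = ∑ x ∈ t, if I = g x then f (g x) * w x else 0 := by
    intro I _
    rw [Finset.mul_sum]
    refine Finset.sum_congr rfl fun x _ => ?_
    split
    · next h => rw [h]
    · rw [mul_zero]
  rw [Finset.sum_congr rfl this, Finset.sum_comm]
  refine Finset.sum_congr rfl fun x _ => ?_
  exact Finset.sum_ite_eq' s (g x) (fun I => f (g x) * w x)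

lemma aux {N : ℕ} (q : Fin N → ℝ) :
    ∀ A : Finset (Fin N), (∀ i ∈ A, q i ∈ Set.Icc (0:ℝ) 1) →
    (∑ i ∈ A, q i ≤ (A.card : ℝ) - 1) → 2 ≤ A.card →
    ∃ p : Finset (Fin N) → ℝ,
      (∀ I, 0 ≤ p I) ∧
      (∀ I, p I ≠ 0 → I ⊆ A ∧ 2 ≤ I.card ∧ I.card ≤ A.card - 1) ∧
      (∀ i ∈ A, ∑ I ∈ univ.filter (fun I => i ∈ I), p I ≤ q i) ∧
      (∑ i ∈ A, q i) - 1 ≤ ∑ I, ((I.card : ℝ) - 1) * p I := by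
  intro A
  induction A using Finset.strongInduction with
  | _ A ih =>
    intro h01 hs hA
    by_cases hA2 : A.card = 2
    · -- base case: empty p works since sum ≤ 1
      refine ⟨fun _ => 0, fun I => le_refl 0, fun I h => absurd rfl h, fun i hi => ?_, ?_⟩
      · simpa using (h01 i hi).1
      · rw [hA2] at hs
        norm_num at hs
        simpa using by linarith
    · have hA3 : 3 ≤ A.card := by omega
      by_cases hAB : ∃ j ∈ A, (∑ i ∈ A, q i) - q j ≤ (A.card : ℝ) - 2
      · obtain ⟨j, hj, hj2⟩ := hAB
        have hjA' : j ∉ A.erase j := Finset.notMem_erase j A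
        have hA'sub : A.erase j ⊆ A := Finset.erase_subset j A
        have hcardn : (A.erase j).card = A.card - 1 := Finset.card_erase_of_mem hj
        have hcardR : ((A.erase j).card : ℝ) = (A.card : ℝ) - 1 := by
          rw [hcardn, Nat.cast_sub (by omega)]
          norm_num
        have hSsplit : ∑ i ∈ A, q i = q j + ∑ i ∈ A.erase j, q i := by
          rw [Finset.add_sum_erase A q hj]
        obtain ⟨p', hp'0, hsupp', hcov', hobj'⟩ := ih (A.erase j) (Finset.erase_ssubset hj)
          (fun i hi => h01 i (hA'sub hi)) (by rw [hcardR]; linarith) (by omega)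
        set S : ℝ := ∑ i ∈ A, q i with hS
        set S' : ℝ := ∑ i ∈ A.erase j, q i with hS'
        set O : ℝ := ∑ I : Finset (Fin N), ((I.card : ℝ) - 1) * p' I with hO
        set P : ℝ := ∑ I : Finset (Fin N), p' I with hP
        have hqj0 : 0 ≤ q j := (h01 j hj).1
        have hqj1 : q j ≤ 1 := (h01 j hj).2
        have hvanish : ∀ I : Finset (Fin N), j ∈ I → p' I = 0 := by
          intro I hI
          by_contra h
          exact hjA' ((hsupp' I h).1 hI)
        have hcovj : ∑ I ∈ Finset.univ.filter (fun I : Finset (Fin N) => j ∈ I), p' I = 0 :=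
          Finset.sum_eq_zero fun I hI => hvanish I (Finset.mem_filter.mp hI).2
        have hPext : ∑ I' ∈ Finset.univ.filter (fun J : Finset (Fin N) => j ∉ J), p' I' = P := by
          rw [hP]
          refine Finset.sum_subset (Finset.filter_subset _ _) fun I' _ hI' => ?_
          refine hvanish I' ?_
          simpa using hI'
        have hcovext : ∀ i : Fin N,
            ∑ I' ∈ Finset.univ.filter (fun J : Finset (Fin N) => j ∉ J),
              (if i ∈ I' then p' I' else 0)
            = ∑ I ∈ Finset.univ.filter (fun I : Finset (Fin N) => i ∈ I), p' I := by
          intro i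
          have hrhs : ∑ I ∈ Finset.univ.filter (fun I : Finset (Fin N) => i ∈ I), p' I
              = ∑ I ∈ (Finset.univ : Finset (Finset (Fin N))), if i ∈ I then p' I else 0 :=
            Finset.sum_filter _ _
          rw [hrhs]
          refine Finset.sum_subset (Finset.filter_subset _ _) fun I' _ hI' => ?_
          have hjI' : j ∈ I' := by simpa using hI'
          simp [hvanish I' hjI']
        have hcovsum : ∑ k ∈ A.erase j,
            (∑ I ∈ Finset.univ.filter (fun I : Finset (Fin N) => k ∈ I), p' I) = O + P := by
          have h1 : ∀ k ∈ A.erase j,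
              (∑ I ∈ Finset.univ.filter (fun I : Finset (Fin N) => k ∈ I), p' I)
              = ∑ I : Finset (Fin N), if k ∈ I then p' I else 0 := by
            intro k _
            rw [Finset.sum_filter]
          rw [Finset.sum_congr rfl h1, Finset.sum_comm]
          have h2 : ∀ I : Finset (Fin N), (∑ k ∈ A.erase j, if k ∈ I then p' I else 0)
              = ((I.card : ℝ) - 1) * p' I + p' I := by
            intro I
            rw [← Finset.sum_filter, Finset.sum_const, Finset.filter_mem_eq_inter]
            by_cases h : p' I = 0
            · simp [h]
            · obtain ⟨hsub, hc2, _⟩ := hsupp' I h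
              rw [Finset.inter_eq_right.mpr hsub, nsmul_eq_mul]
              ring
          rw [Finset.sum_congr rfl fun I _ => h2 I, Finset.sum_add_distrib, ← hO, ← hP]
        have hobjext : ∑ I' ∈ Finset.univ.filter (fun J : Finset (Fin N) => j ∉ J),
            (I'.card : ℝ) * p' I' = O + P := by
          have h1 : ∑ I' ∈ Finset.univ.filter (fun J : Finset (Fin N) => j ∉ J),
              (I'.card : ℝ) * p' I' = ∑ I' : Finset (Fin N), (I'.card : ℝ) * p' I' := by
            refine Finset.sum_subset (Finset.filter_subset _ _) fun I' _ hI' => ?_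
            have hjI' : j ∈ I' := by simpa using hI'
            rw [hvanish I' hjI', mul_zero]
          rw [h1, hO, hP, ← Finset.sum_add_distrib]
          exact Finset.sum_congr rfl fun I _ => by ring
        by_cases hD : S - 1 - O ≤ 0
        · refine ⟨p', hp'0, fun I hI => ?_, fun i hi => ?_, by linarith⟩
          · obtain ⟨hsub, hc2, hc3⟩ := hsupp' I hI
            exact ⟨hsub.trans hA'sub, hc2, by omega⟩
          · by_cases hij : i = j
            · rw [hij, hcovj]
              exact hqj0
            · exact hcov' i (Finset.mem_erase.mpr ⟨hij, hi⟩)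
        · push_neg at hD
          have hq1 : S - 1 - O ≤ S' - O := by linarith
          have hCpos : (0:ℝ) < S' - O := lt_of_lt_of_le hD hq1
          set l : ℝ := (S - 1 - O) / (S' - O) with hl
          have hl0 : 0 ≤ l := le_of_lt (div_pos hD hCpos)
          have hl1 : l ≤ 1 := (div_le_one hCpos).mpr hq1
          have hlC : l * (S' - O) = S - 1 - O := div_mul_cancel₀ _ (ne_of_gt hCpos)
          set p : Finset (Fin N) → ℝ := fun I =>
            (1 - l) * p' I
            + l * (∑ I' ∈ Finset.univ.filter (fun J : Finset (Fin N) => j ∉ J),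
                if I = insert j I' then p' I' else 0)
            + l * (∑ k ∈ A.erase j, if I = insert k {j} then
                q k - ∑ J ∈ Finset.univ.filter (fun J : Finset (Fin N) => k ∈ J), p' J
                else 0) with hpdef
          have key : ∀ (s : Finset (Finset (Fin N))) (f : Finset (Fin N) → ℝ),
              ∑ I ∈ s, f I * p I
                = (1 - l) * (∑ I ∈ s, f I * p' I)
                + l * (∑ I' ∈ Finset.univ.filter (fun J : Finset (Fin N) => j ∉ J),
                    if insert j I' ∈ s then f (insert j I') * p' I' else 0)
                + l * (∑ k ∈ A.erase j, if insert k {j} ∈ s then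
                    f (insert k {j}) * (q k -
                      ∑ J ∈ Finset.univ.filter (fun J : Finset (Fin N) => k ∈ J), p' J)
                    else 0) := by
            intro s f
            have e : ∀ I ∈ s, f I * p I
                = (1 - l) * (f I * p' I)
                + l * (f I * ∑ I' ∈ Finset.univ.filter (fun J : Finset (Fin N) => j ∉ J),
                    if I = insert j I' then p' I' else 0)
                + l * (f I * ∑ k ∈ A.erase j, if I = insert k {j} then
                    q k - ∑ J ∈ Finset.univ.filter (fun J : Finset (Fin N) => k ∈ J), p' J
                    else 0) := by
              intro I _
              simp only [hpdef]
              ring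
            rw [Finset.sum_congr rfl e, Finset.sum_add_distrib, Finset.sum_add_distrib,
              ← Finset.mul_sum, ← Finset.mul_sum, ← Finset.mul_sum,
              helperf s (Finset.univ.filter (fun J : Finset (Fin N) => j ∉ J))
                (fun I' => insert j I') p' f,
              helperf s (A.erase j) (fun k => insert k {j})
                (fun k => q k - ∑ J ∈ Finset.univ.filter (fun J : Finset (Fin N) => k ∈ J), p' J)
                f]
          have hslack : ∀ k ∈ A.erase j,
              0 ≤ q k - ∑ J ∈ Finset.univ.filter (fun J : Finset (Fin N) => k ∈ J), p' J := by
            intro k hk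
            have := hcov' k hk
            linarith
          refine ⟨p, ?_, ?_, ?_, ?_⟩
          · intro I
            simp only [hpdef]
            have h1 : 0 ≤ (1 - l) * p' I := mul_nonneg (by linarith) (hp'0 I)
            have h2 : 0 ≤ ∑ I' ∈ Finset.univ.filter (fun J : Finset (Fin N) => j ∉ J),
                if I = insert j I' then p' I' else 0 := by
              refine Finset.sum_nonneg fun I' _ => ?_
              split
              · exact hp'0 I'
              · exact le_refl 0
            have h3 : 0 ≤ ∑ k ∈ A.erase j, if I = insert k {j} then
                q k - ∑ J ∈ Finset.univ.filter (fun J : Finset (Fin N) => k ∈ J), p' J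
                else 0 := by
              refine Finset.sum_nonneg fun k hk => ?_
              split
              · exact hslack k hk
              · exact le_refl 0
            have h4 := mul_nonneg hl0 h2
            have h5 := mul_nonneg hl0 h3
            linarith
          · intro I hI
            have hone : (1 - l) * p' I ≠ 0
                ∨ (∑ I' ∈ Finset.univ.filter (fun J : Finset (Fin N) => j ∉ J),
                    if I = insert j I' then p' I' else 0) ≠ 0
                ∨ (∑ k ∈ A.erase j, if I = insert k {j} then
                    q k - ∑ J ∈ Finset.univ.filter (fun J : Finset (Fin N) => k ∈ J), p' J
                    else 0) ≠ 0 := by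
              by_contra h
              push_neg at h
              apply hI
              simp only [hpdef]
              rw [h.1, h.2.1, h.2.2]
              ring
            rcases hone with h | h | h
            · have hp'ne : p' I ≠ 0 := fun h0 => h (by rw [h0, mul_zero])
              obtain ⟨hsub, hc2, hc3⟩ := hsupp' I hp'ne
              exact ⟨hsub.trans hA'sub, hc2, by omega⟩
            · obtain ⟨I', hI', hne⟩ := Finset.exists_ne_zero_of_sum_ne_zero h
              have hIeq : I = insert j I' := by
                by_contra he
                simp [he] at hne
              rw [if_pos hIeq] at hne
              have hjI' : j ∉ I' := by simpa using hI'
              obtain ⟨hsub, hc2, hc3⟩ := hsupp' I' hne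
              have hcardI : I.card = I'.card + 1 := by
                rw [hIeq, Finset.card_insert_of_notMem hjI']
              refine ⟨?_, by omega, by omega⟩
              rw [hIeq]
              exact Finset.insert_subset hj (hsub.trans hA'sub)
            · obtain ⟨k, hk, hne⟩ := Finset.exists_ne_zero_of_sum_ne_zero h
              have hIeq : I = insert k {j} := by
                by_contra he
                simp [he] at hne
              have hkj : k ≠ j := (Finset.mem_erase.mp hk).1
              have hcardI : I.card = 2 := by
                rw [hIeq, Finset.card_insert_of_notMem (by simp [hkj]), Finset.card_singleton]
              refine ⟨?_, by omega, by omega⟩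
              rw [hIeq]
              exact Finset.insert_subset (hA'sub hk) (Finset.singleton_subset_iff.mpr hj)
          · intro i hi
            have hk := key (Finset.univ.filter (fun I : Finset (Fin N) => i ∈ I))
              (fun _ => (1:ℝ))
            simp only [one_mul] at hk
            rw [hk]
            simp only [Finset.mem_filter, Finset.mem_univ, true_and, Finset.mem_insert,
              Finset.mem_singleton]
            by_cases hij : i = j
            · subst hij
              simp only [true_or, or_true, if_true]
              rw [hcovj, hPext, Finset.sum_sub_distrib, hcovsum, ← hS']
              have hfin : l * P + l * (S' - (O + P)) = S - 1 - O := by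
                rw [← hlC]
                ring
              have hSS : S = q i + S' := hSsplit
              linarith
            · have hiA' : i ∈ A.erase j := Finset.mem_erase.mpr ⟨hij, hi⟩
              simp only [hij, false_or, or_false]
              rw [hcovext i, Finset.sum_ite_eq (A.erase j) i, if_pos hiA']
              have hcle := hcov' i hiA'
              have hslacki := hslack i hiA'
              have hmn : l * (q i - ∑ J ∈ Finset.univ.filter
                  (fun J : Finset (Fin N) => i ∈ J), p' J)
                  ≤ q i - ∑ J ∈ Finset.univ.filter (fun J : Finset (Fin N) => i ∈ J), p' J := by
                nlinarith
              linarith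
          · have hk := key Finset.univ (fun I => ((I.card : ℝ) - 1))
            simp only [Finset.mem_univ, if_true] at hk
            rw [hk, ← hO]
            have ht2 : ∑ I' ∈ Finset.univ.filter (fun J : Finset (Fin N) => j ∉ J),
                (((insert j I').card : ℝ) - 1) * p' I' = O + P := by
              rw [← hobjext]
              refine Finset.sum_congr rfl fun I' hI' => ?_
              have hjI' : j ∉ I' := by simpa using hI'
              rw [Finset.card_insert_of_notMem hjI']
              push_cast
              ring
            have ht3 : ∑ k ∈ A.erase j, (((insert k ({j} : Finset (Fin N))).card : ℝ) - 1)
                * (q k - ∑ J ∈ Finset.univ.filter (fun J : Finset (Fin N) => k ∈ J), p' J)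
                = S' - (O + P) := by
              have hc : ∀ k ∈ A.erase j, (((insert k ({j} : Finset (Fin N))).card : ℝ) - 1)
                  * (q k - ∑ J ∈ Finset.univ.filter (fun J : Finset (Fin N) => k ∈ J), p' J)
                  = q k - ∑ J ∈ Finset.univ.filter (fun J : Finset (Fin N) => k ∈ J), p' J := by
                intro k hk2
                have hkj : k ≠ j := (Finset.mem_erase.mp hk2).1
                rw [Finset.card_insert_of_notMem (by simp [hkj]), Finset.card_singleton]
                norm_num
              rw [Finset.sum_congr rfl hc, Finset.sum_sub_distrib, hcovsum, ← hS']
            rw [ht2, ht3]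
            have hfin : (1 - l) * O + l * (O + P) + l * (S' - (O + P)) = S - 1 := by
              linear_combination hlC
            linarith [hfin]
      · -- Case B : all q k > S - (card - 2); use sets A.erase k
        push_neg at hAB
        have ha3 : (3:ℝ) ≤ (A.card : ℝ) := by exact_mod_cast hA3
        have ha2pos : (0:ℝ) < (A.card : ℝ) - 2 := by linarith
        have hapos : (0:ℝ) < (A.card : ℝ) := by linarith
        set a : ℝ := (A.card : ℝ) with ha
        set S : ℝ := ∑ i ∈ A, q i with hS
        set T : ℝ := (S - 1) / (a - 2) with hT
        set c : ℝ := (S - (a - 1) * T) / a with hc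
        have hTid : (a - 2) * T = S - 1 := by
          rw [hT]; field_simp
        have hcid : a * c = S - (a - 1) * T := by
          rw [hc]; field_simp
        have hkeyc : ((a - 2) * a) * c = a - 1 - S := by
          linear_combination (a - 2) * hcid - (a - 1) * hTid
        have hc0 : 0 ≤ c := by nlinarith [hkeyc, mul_pos ha2pos hapos]
        set t : Fin N → ℝ := fun k => T - q k + c with htdef
        have ht0 : ∀ k ∈ A, 0 ≤ t k := by
          intro k hk
          have h1 := hAB k hk
          have h2 := (h01 k hk).1
          simp only [htdef]
          nlinarith
        have htsum : ∑ k ∈ A, t k = T := by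
          simp only [htdef]
          rw [Finset.sum_add_distrib, Finset.sum_sub_distrib, Finset.sum_const, Finset.sum_const]
          simp only [nsmul_eq_mul, ← ha, ← hS]
          linarith
        refine ⟨fun I => ∑ k ∈ A, if I = A.erase k then t k else 0, ?_, ?_, ?_, ?_⟩
        · intro I
          refine Finset.sum_nonneg fun k hk => ?_
          split
          · exact ht0 k hk
          · exact le_refl 0
        · intro I hI
          obtain ⟨k, hk, hne⟩ := Finset.exists_ne_zero_of_sum_ne_zero hI
          have hIk : I = A.erase k := by
            by_contra h
            simp [h] at hne
          have hcd := Finset.card_erase_of_mem hk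
          subst hIk
          exact ⟨Finset.erase_subset k A, by omega, by omega⟩
        · intro i hi
          have hkey := helperf (Finset.univ.filter (fun I : Finset (Fin N) => i ∈ I)) A
            (fun k => A.erase k) t (fun _ => (1:ℝ))
          simp only [one_mul] at hkey
          rw [hkey]
          simp only [Finset.mem_filter, Finset.mem_univ, true_and, Finset.mem_erase]
          have hrw : ∀ k ∈ A, (if i ≠ k ∧ i ∈ A then t k else 0)
              = t k - (if i = k then t k else 0) := by
            intro k _
            by_cases h : i = k <;> simp [h, hi]
          rw [Finset.sum_congr rfl hrw, Finset.sum_sub_distrib, htsum, Finset.sum_ite_eq A i t,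
            if_pos hi]
          simp only [htdef]
          linarith
        · have hkey := helperf Finset.univ A (fun k => A.erase k) t
            (fun I => (I.card : ℝ) - 1)
          rw [hkey]
          simp only [Finset.mem_univ, if_true]
          have hrw : ∀ k ∈ A, ((((A.erase k).card : ℝ)) - 1) * t k = (a - 2) * t k := by
            intro k hk
            rw [Finset.card_erase_of_mem hk, Nat.cast_sub (by omega)]
            push_cast
            rw [← ha]
            ring
          rw [Finset.sum_congr rfl hrw, ← Finset.mul_sum, htsum]
          linarith

theorem stmt2 (n : ℕ) (hn : 3 ≤ n) (q : Fin n → ℝ) (hq : ∀ i, q i ∈ Set.Icc (0 : ℝ) 1)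
    (hsum : ∑ i, q i ≤ (n : ℝ) - 1) :
    ∃ p : Finset (Fin n) → ℝ,
      (∀ I, 0 ≤ p I) ∧
      (∀ i, ∑ I ∈ Finset.univ.filter
          (fun I : Finset (Fin n) => 2 ≤ I.card ∧ I.card ≤ n - 1 ∧ i ∈ I), p I ≤ q i) ∧
      (∑ i, q i) - 1 ≤ ∑ I ∈ Finset.univ.filter
          (fun I : Finset (Fin n) => 2 ≤ I.card ∧ I.card ≤ n - 1), ((I.card : ℝ) - 1) * p I := by
  have hcard : (Finset.univ : Finset (Fin n)).card = n := by simp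
  obtain ⟨p, hp0, hsupp, hcov, hobj⟩ := aux q Finset.univ
    (fun i _ => hq i)
    (by rw [hcard]; simpa using hsum)
    (by omega)
  refine ⟨p, hp0, fun i => ?_, ?_⟩
  · refine le_trans (Finset.sum_le_sum_of_subset_of_nonneg ?_ fun I _ _ => hp0 I)
      (hcov i (Finset.mem_univ i))
    intro I hI
    simp only [Finset.mem_filter] at hI ⊢
    exact ⟨hI.1, hI.2.2.2⟩
  · refine le_trans hobj (le_of_eq ?_)
    rw [← Finset.sum_filter_add_sum_filter_not Finset.univ
      (fun I : Finset (Fin n) => 2 ≤ I.card ∧ I.card ≤ n - 1)]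
    have : ∑ I ∈ Finset.univ.filter
        (fun I : Finset (Fin n) => ¬(2 ≤ I.card ∧ I.card ≤ n - 1)), ((I.card : ℝ) - 1) * p I = 0 := by
      refine Finset.sum_eq_zero fun I hI => ?_
      simp only [Finset.mem_filter] at hI
      by_cases h : p I = 0
      · rw [h, mul_zero]
      · obtain ⟨_, h2, h3⟩ := hsupp I h
        exact absurd ⟨h2, by rwa [hcard] at h3⟩ hI.2
    rw [this, add_zero]
end

section
/- For n >= 3 and q_1,...,q_n in [0,1], the maximum of sum_{I in M} (|I|-1) p_I over non-negative coefficients (p_I)_{I in M} satisfying sum_{I in M_i} p_I <= q_i for all i, equals min{ ((n-2)/(n-1)) * sum_i q_i, sum_i q_i - max_i q_i }. -/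
open Finset


lemma exists_sub_sum {α : Type*} [DecidableEq α] (s : Finset α) (g : α → ℝ)
    (hg : ∀ a, 0 ≤ g a) :
    ∀ w : ℝ, 0 ≤ w → w ≤ ∑ a ∈ s, g a →
    ∃ g₁ : α → ℝ, (∀ a, 0 ≤ g₁ a) ∧ (∀ a, g₁ a ≤ g a) ∧ (∑ a ∈ s, g₁ a = w) ∧
      (∀ a, a ∉ s → g₁ a = 0) := by
  classical
  induction s using Finset.induction_on with
  | empty =>
    intro w hw0 hw
    simp only [Finset.sum_empty] at hw
    exact ⟨fun _ => 0, fun a => le_rfl, fun a => hg a, by simp [le_antisymm hw hw0],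
      fun a _ => rfl⟩
  | insert _ _ ha ih =>
    rename_i a s
    intro w hw0 hw
    rw [Finset.sum_insert ha] at hw
    set w₁ := min w (g a) with hw₁
    have hw₁0 : 0 ≤ w₁ := le_min hw0 (hg a)
    have h2 : 0 ≤ w - w₁ := by simp [hw₁]
    have h3 : w - w₁ ≤ ∑ x ∈ s, g x := by
      rcases min_cases w (g a) with ⟨h, _⟩ | ⟨h, _⟩
      · rw [hw₁, h]; simpa using Finset.sum_nonneg fun x _ => hg x
      · rw [hw₁, h]; linarith
    obtain ⟨g₁, hg₁0, hg₁le, hg₁sum, hg₁out⟩ := ih (w - w₁) h2 h3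
    refine ⟨Function.update g₁ a w₁, ?_, ?_, ?_, ?_⟩
    · intro b; rcases eq_or_ne b a with rfl | hb
      · simp [hw₁0]
      · simp [Function.update_of_ne hb, hg₁0 b]
    · intro b; rcases eq_or_ne b a with rfl | hb
      · simp [hw₁, min_le_right]
      · simp [Function.update_of_ne hb, hg₁le b]
    · rw [Finset.sum_insert ha, Function.update_self]
      have : ∑ x ∈ s, Function.update g₁ a w₁ x = ∑ x ∈ s, g₁ x := by
        apply Finset.sum_congr rfl
        intro x hx
        exact Function.update_of_ne (ne_of_mem_of_not_mem hx ha) _ _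
      rw [this, hg₁sum]; ring
    · intro b hb
      have hba : b ≠ a := fun h => hb (by rw [h]; exact Finset.mem_insert_self a s)
      rw [Function.update_of_ne hba]
      exact hg₁out b (fun h => hb (Finset.mem_insert_of_mem h))

lemma reindex {n : ℕ} (i₀ : Fin n) (F : Finset (Fin n) → ℝ) :
    ∑ I ∈ Finset.univ, (if i₀ ∈ I then F I else 0)
      = ∑ J ∈ Finset.univ, (if i₀ ∈ J then 0 else F (insert i₀ J)) := by
  classical
  have hrw : ∀ J : Finset (Fin n), (if i₀ ∈ J then (0:ℝ) else F (insert i₀ J))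
      = (if i₀ ∉ J then F (insert i₀ J) else 0) := by
    intro J; by_cases h : i₀ ∈ J <;> simp [h]
  simp_rw [hrw]
  rw [← Finset.sum_filter, ← Finset.sum_filter]
  exact Finset.sum_nbij' (fun I => I.erase i₀) (fun J => insert i₀ J)
    (by intro I hI; simp)
    (by intro J hJ; simp)
    (by intro I hI; simp at hI; exact Finset.insert_erase hI)
    (by intro J hJ; simp at hJ; exact Finset.erase_insert hJ)
    (by intro I hI; simp at hI; rw [Finset.insert_erase hI])

lemma reindex2 {n : ℕ} (i₀ : Fin n) (g : Finset (Fin n) → ℝ)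
    (P : Finset (Fin n) → Prop) [DecidablePred P] :
    ∑ J ∈ Finset.univ.filter P, (if i₀ ∈ J then g (J.erase i₀) else 0)
      = ∑ J ∈ (Finset.univ : Finset (Finset (Fin n))),
          (if i₀ ∉ J ∧ P (insert i₀ J) then g J else 0) := by
  classical
  rw [Finset.sum_filter]
  have key : ∀ J : Finset (Fin n),
      (if P J then (if i₀ ∈ J then g (J.erase i₀) else 0) else 0)
        = (if i₀ ∈ J then (if P J then g (J.erase i₀) else 0) else 0) := by
    intro J; by_cases h : P J <;> by_cases h2 : i₀ ∈ J <;> simp [h, h2]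
  simp_rw [key]
  rw [reindex i₀ (fun I => if P I then g (I.erase i₀) else 0)]
  apply Finset.sum_congr rfl
  intro J _
  by_cases h : i₀ ∈ J
  · simp [h]
  · by_cases hP : P (insert i₀ J) <;> simp [h, hP, Finset.erase_insert h]

lemma lemD {n : ℕ} : ∀ (k : ℕ) (S : Finset (Fin n)), S.card = k → ∀ (m : ℝ), 0 ≤ m →
    ∀ (r : Fin n → ℝ), (∀ i ∈ S, 0 ≤ r i) → (∀ i ∈ S, r i ≤ m) →
    (∑ i ∈ S, r i ≤ ((k : ℝ) - 1) * m) →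
    ∃ p : Finset (Fin n) → ℝ, (∀ J, 0 ≤ p J) ∧
      (∀ J, p J ≠ 0 → J ⊆ S ∧ J.Nonempty ∧ J.card + 1 ≤ k) ∧
      (∀ i ∈ S, ∑ J ∈ Finset.univ.filter (fun J => i ∈ J), p J = r i) ∧
      (∑ J ∈ (Finset.univ : Finset (Finset (Fin n))), p J ≤ m) := by
  classical
  intro k
  induction k with
  | zero =>
    intro S hS m hm r _ _ _
    have hSe : S = ∅ := Finset.card_eq_zero.mp hS
    exact ⟨fun _ => 0, fun _ => le_rfl, fun J hJ => absurd rfl hJ,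
      by simp [hSe], by simpa using hm⟩
  | succ k ih =>
    intro S hS m hm r hr0 hrm hsum
    obtain ⟨i₀, hi₀⟩ : S.Nonempty := Finset.card_pos.mp (by omega)
    set S' := S.erase i₀ with hS'def
    have hS' : S'.card = k := by rw [hS'def, card_erase_of_mem hi₀, hS]; omega
    have hmem : ∀ j ∈ S', j ∈ S := fun j hj => mem_of_mem_erase hj
    have hi₀S' : i₀ ∉ S' := notMem_erase _ _
    rcases Nat.eq_zero_or_pos k with hk0 | hk1
    · -- k = 0 : S = {i₀}, r i₀ = 0
      subst hk0
      have hS1 : S = {i₀} := by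
        apply Finset.eq_singleton_iff_unique_mem.mpr
        refine ⟨hi₀, fun x hx => ?_⟩
        by_contra hne
        have : ({x, i₀} : Finset (Fin n)) ⊆ S := by
          intro y hy; simp at hy; rcases hy with rfl | rfl; exacts [hx, hi₀]
        have := Finset.card_le_card this
        rw [Finset.card_pair hne, hS] at this
        omega
      have hr : r i₀ = 0 := by
        have h1 := hsum
        rw [hS1] at h1
        simp at h1
        have := hr0 i₀ hi₀
        linarith
      refine ⟨fun _ => 0, fun _ => le_rfl, fun J hJ => absurd rfl hJ, ?_, by simpa using hm⟩
      intro i hi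
      rw [hS1] at hi; simp at hi; subst hi
      simp [hr]
    · -- main case, k ≥ 1
      set c := (∑ i ∈ S', r i) - ((k:ℝ) - 1) * m with hc
      set cp := max c 0 with hcp
      have hcp0 : 0 ≤ cp := le_max_right _ _
      have hcle : ∀ j ∈ S', cp ≤ r j := by
        intro j hj
        refine max_le ?_ (hr0 j (hmem j hj))
        have hcard : (S'.erase j).card = k - 1 := by rw [card_erase_of_mem hj, hS']
        have h1 : ∑ i ∈ S'.erase j, r i ≤ ((k:ℝ) - 1) * m := by
          calc ∑ i ∈ S'.erase j, r i ≤ (S'.erase j).card • m :=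
                Finset.sum_le_card_nsmul _ _ _
                  (fun x hx => hrm x (hmem x (mem_of_mem_erase hx)))
            _ = ((k - 1 : ℕ) : ℝ) * m := by rw [hcard, nsmul_eq_mul]
            _ ≤ ((k:ℝ) - 1) * m := by
                have : ((k - 1 : ℕ) : ℝ) = (k:ℝ) - 1 := by
                  have : (1:ℕ) ≤ k := hk1
                  push_cast [Nat.cast_sub this]; ring
                rw [this]
        have h2 : ∑ i ∈ S'.erase j, r i = ∑ i ∈ S', r i - r j :=
          Finset.sum_erase_eq_sub hj
        rw [hc]; linarith
      have hsplit : ∑ i ∈ S', r i = ∑ i ∈ S, r i - r i₀ := Finset.sum_erase_eq_sub hi₀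
      have hri₀m' : r i₀ ≤ m - cp := by
        have h1 : c ≤ m - r i₀ := by
          have hk' : ((k+1 : ℕ) : ℝ) - 1 = (k:ℝ) := by push_cast; ring
          rw [hk'] at hsum
          rw [hc]; linarith
        have h2 : (0:ℝ) ≤ m - r i₀ := by linarith [hrm i₀ hi₀]
        have := max_le h1 h2
        rw [← hcp] at this; linarith
      set m' := m - cp with hm'def
      have hm'0 : 0 ≤ m' := le_trans (hr0 i₀ hi₀) hri₀m'
      set r' := fun i => r i - cp with hr'def
      obtain ⟨p', hp'0, hp'supp, hp'deg, hp'mass⟩ :=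
        ih S' hS' m' hm'0 r'
          (fun i hi => by simp only [hr'def]; linarith [hcle i hi])
          (fun i hi => by simp only [hr'def, hm'def]; linarith [hrm i (hmem i hi)])
          (by
            simp only [hr'def]
            rw [Finset.sum_sub_distrib, Finset.sum_const, hS', nsmul_eq_mul]
            have hccp : c ≤ cp := le_max_left _ _
            rw [hc] at hccp
            have hk1' : (1:ℝ) ≤ (k:ℝ) := by exact_mod_cast hk1
            nlinarith [hcp0])
      -- p' facts
      have hp'z : ∀ J, i₀ ∈ J → p' J = 0 := by
        intro J hJ
        by_contra h
        exact hi₀S' ((hp'supp J h).1 hJ)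
      set M' := ∑ J ∈ (Finset.univ : Finset (Finset (Fin n))), p' J with hM'
      have hM'0 : 0 ≤ M' := Finset.sum_nonneg fun J _ => hp'0 J
      set w := min (r i₀) M' with hw
      have hw0 : 0 ≤ w := le_min (hr0 i₀ hi₀) hM'0
      have hwM' : w ≤ M' := min_le_right _ _
      obtain ⟨p₁, hp₁0, hp₁le, hp₁sum, -⟩ :=
        exists_sub_sum Finset.univ p' hp'0 w hw0 (by rw [← hM']; exact hwM')
      set p₂ := fun J => p' J - p₁ J with hp₂def
      have hp₂0 : ∀ J, 0 ≤ p₂ J := fun J => by simp [hp₂def, hp₁le J]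
      have hp₁z : ∀ J, i₀ ∈ J → p₁ J = 0 := by
        intro J hJ
        have h1 := hp₁le J
        have h2 := hp₁0 J
        rw [hp'z J hJ] at h1
        linarith
      have hp₂z : ∀ J, i₀ ∈ J → p₂ J = 0 := fun J hJ => by
        simp [hp₂def, hp'z J hJ, hp₁z J hJ]
      set p : Finset (Fin n) → ℝ := fun J =>
        (if i₀ ∈ J then p₁ (J.erase i₀) else p₂ J)
          + (if J = S' then cp else 0)
          + (if J = ({i₀} : Finset (Fin n)) then r i₀ - w else 0) with hpdef
      have hriw : 0 ≤ r i₀ - w := by simp [hw]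
      have hp0 : ∀ J, 0 ≤ p J := by
        intro J
        apply add_nonneg
        apply add_nonneg
        · split <;> [exact hp₁0 _; exact hp₂0 _]
        · split <;> [exact hcp0; exact le_rfl]
        · split <;> [exact hriw; exact le_rfl]
      -- support
      have hsupp : ∀ J, p J ≠ 0 → J ⊆ S ∧ J.Nonempty ∧ J.card + 1 ≤ k + 1 := by
        intro J hJ
        by_cases hJS' : J = S'
        · subst hJS'
          exact ⟨Finset.erase_subset _ _, Finset.card_pos.mp (by omega), by omega⟩
        by_cases hJi₀ : J = ({i₀} : Finset (Fin n))
        · subst hJi₀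
          refine ⟨by simpa using hi₀, ⟨i₀, by simp⟩, by simp; omega⟩
        by_cases hi : i₀ ∈ J
        · have hne : p₁ (J.erase i₀) ≠ 0 := by
            intro h; apply hJ; simp [hpdef, hi, h, hJS', hJi₀]
          have hne' : p' (J.erase i₀) ≠ 0 := by
            intro h; apply hne
            have := hp₁le (J.erase i₀); have := hp₁0 (J.erase i₀); linarith [h ▸ hp₁le (J.erase i₀)]
          obtain ⟨h1, h2, h3⟩ := hp'supp _ hne'
          refine ⟨?_, ⟨i₀, hi⟩, ?_⟩
          · intro x hx
            rcases eq_or_ne x i₀ with rfl | hxne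
            · exact hi₀
            · exact hmem x (h1 (Finset.mem_erase.mpr ⟨hxne, hx⟩))
          · have : J.card = (J.erase i₀).card + 1 := by
              rw [card_erase_of_mem hi]
              have : 1 ≤ J.card := Finset.card_pos.mpr ⟨i₀, hi⟩
              omega
            omega
        · have hne : p₂ J ≠ 0 := by
            intro h; apply hJ; simp [hpdef, hi, h, hJS', hJi₀]
          have hne' : p' J ≠ 0 := by
            intro h; apply hne
            have h1 := hp₁le J; have h2 := hp₁0 J
            simp only [hp₂def]; linarith
          obtain ⟨h1, h2, h3⟩ := hp'supp _ hne'
          exact ⟨fun x hx => hmem x (h1 hx), h2, by omega⟩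
      -- degree computation
      have hdeg : ∀ i ∈ S, ∑ J ∈ Finset.univ.filter (fun J => i ∈ J), p J = r i := by
        intro i hi
        simp only [hpdef]
        rw [Finset.sum_add_distrib, Finset.sum_add_distrib]
        have hT2 : ∑ J ∈ Finset.univ.filter (fun J => i ∈ J),
            (if J = S' then cp else 0) = if i ∈ S' then cp else 0 := by
          rw [Finset.sum_ite_eq' (Finset.univ.filter (fun J => i ∈ J)) S' (fun _ => cp)]
          simp
        have hT3 : ∑ J ∈ Finset.univ.filter (fun J => i ∈ J),
            (if J = ({i₀} : Finset (Fin n)) then r i₀ - w else 0)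
              = if i = i₀ then r i₀ - w else 0 := by
          rw [Finset.sum_ite_eq' (Finset.univ.filter (fun J => i ∈ J)) ({i₀} : Finset (Fin n))
            (fun _ => r i₀ - w)]
          simp
        have hsplitT1 : ∀ J : Finset (Fin n),
            (if i₀ ∈ J then p₁ (J.erase i₀) else p₂ J)
              = (if i₀ ∈ J then p₁ (J.erase i₀) else 0) + (if i₀ ∈ J then 0 else p₂ J) := by
          intro J; by_cases h : i₀ ∈ J <;> simp [h]
        have hT1a : ∑ J ∈ (Finset.univ : Finset (Finset (Fin n))).filter (fun J => i ∈ J),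
            (if i₀ ∈ J then p₁ (J.erase i₀) else 0)
              = ∑ J ∈ (Finset.univ : Finset (Finset (Fin n))),
                  (if i₀ ∉ J ∧ i ∈ insert i₀ J then p₁ J else 0) :=
          reindex2 i₀ p₁ (fun J => i ∈ J)
        have hT1b : ∑ J ∈ (Finset.univ : Finset (Finset (Fin n))).filter (fun J => i ∈ J),
            (if i₀ ∈ J then 0 else p₂ J)
              = ∑ J ∈ (Finset.univ : Finset (Finset (Fin n))),
                  (if i ∈ J ∧ i₀ ∉ J then p₂ J else 0) := by
          rw [Finset.sum_filter]
          apply Finset.sum_congr rfl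
          intro J _
          by_cases h1 : i ∈ J <;> by_cases h2 : i₀ ∈ J <;> simp [h1, h2]
        rw [Finset.sum_congr rfl (fun J _ => hsplitT1 J), Finset.sum_add_distrib, hT1a, hT1b,
          hT2, hT3]
        rcases eq_or_ne i i₀ with h | hii₀
        · subst h
          have e1 : ∑ J ∈ (Finset.univ : Finset (Finset (Fin n))),
              (if i ∉ J ∧ i ∈ insert i J then p₁ J else 0) = w := by
            rw [← hp₁sum]
            apply Finset.sum_congr rfl
            intro J _
            by_cases h : i ∈ J
            · simp [h, hp₁z J h]
            · simp [h]
          have e2 : ∑ J ∈ (Finset.univ : Finset (Finset (Fin n))),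
              (if i ∈ J ∧ i ∉ J then p₂ J else 0) = 0 := by
            apply Finset.sum_eq_zero; intro J _
            by_cases h : i ∈ J <;> simp [h]
          rw [e1, e2, if_neg hi₀S', if_pos rfl]
          ring
        · have hiS' : i ∈ S' := Finset.mem_erase.mpr ⟨hii₀, hi⟩
          have e1 : ∑ J ∈ (Finset.univ : Finset (Finset (Fin n))),
                (if i₀ ∉ J ∧ i ∈ insert i₀ J then p₁ J else 0)
              + ∑ J ∈ (Finset.univ : Finset (Finset (Fin n))),
                (if i ∈ J ∧ i₀ ∉ J then p₂ J else 0)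
              = ∑ J ∈ Finset.univ.filter (fun J => i ∈ J), p' J := by
            rw [← Finset.sum_add_distrib, Finset.sum_filter]
            apply Finset.sum_congr rfl
            intro J _
            by_cases h2 : i₀ ∈ J
            · simp [h2, Finset.mem_insert, hp'z J h2]
            · by_cases h1 : i ∈ J
              · simp [h1, h2, hp₂def]
              · simp [h1, h2, Finset.mem_insert, hii₀]
          rw [e1, hp'deg i hiS', if_pos hiS', if_neg hii₀]
          simp only [hr'def]
          ring
        -- done both branches
      -- mass computation
      have hmass : ∑ J ∈ (Finset.univ : Finset (Finset (Fin n))), p J ≤ m := by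
        simp only [hpdef]
        rw [Finset.sum_add_distrib, Finset.sum_add_distrib]
        have hT2 : ∑ J ∈ (Finset.univ : Finset (Finset (Fin n))),
            (if J = S' then cp else 0) = cp := by
          rw [Finset.sum_ite_eq' Finset.univ S' (fun _ => cp)]; simp
        have hT3 : ∑ J ∈ (Finset.univ : Finset (Finset (Fin n))),
            (if J = ({i₀} : Finset (Fin n)) then r i₀ - w else 0) = r i₀ - w := by
          rw [Finset.sum_ite_eq' Finset.univ ({i₀} : Finset (Fin n)) (fun _ => r i₀ - w)]; simp
        have hT1 : ∑ J ∈ (Finset.univ : Finset (Finset (Fin n))),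
            (if i₀ ∈ J then p₁ (J.erase i₀) else p₂ J) = M' := by
          have hsplitT1 : ∀ J : Finset (Fin n),
              (if i₀ ∈ J then p₁ (J.erase i₀) else p₂ J)
                = (if i₀ ∈ J then p₁ (J.erase i₀) else 0) + (if i₀ ∈ J then 0 else p₂ J) := by
            intro J; by_cases h : i₀ ∈ J <;> simp [h]
          rw [Finset.sum_congr rfl (fun J _ => hsplitT1 J), Finset.sum_add_distrib]
          have e1 : ∑ J ∈ (Finset.univ : Finset (Finset (Fin n))),
              (if i₀ ∈ J then p₁ (J.erase i₀) else 0) = w := by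
            have := reindex2 i₀ p₁ (fun _ => True)
            simp only [Finset.filter_true] at this
            rw [this, ← hp₁sum]
            apply Finset.sum_congr rfl
            intro J _
            by_cases h : i₀ ∈ J
            · simp [h, hp₁z J h]
            · simp [h]
          have e2 : ∑ J ∈ (Finset.univ : Finset (Finset (Fin n))),
              (if i₀ ∈ J then 0 else p₂ J)
                = M' - w := by
            have : ∀ J : Finset (Fin n), (if i₀ ∈ J then 0 else p₂ J) = p₂ J := by
              intro J; by_cases h : i₀ ∈ J <;> simp [h, hp₂z J]
            rw [Finset.sum_congr rfl (fun J _ => this J)]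
            simp only [hp₂def]
            rw [Finset.sum_sub_distrib, hp₁sum, ← hM']
          rw [e1, e2]; ring
        rw [hT1, hT2, hT3]
        have : w = r i₀ ∨ w = M' := by
          rcases min_cases (r i₀) M' with ⟨h, _⟩ | ⟨h, _⟩
          exacts [Or.inl (by rw [hw, h]), Or.inr (by rw [hw, h])]
        rcases this with h | h <;> rw [h] <;> [linarith [hp'mass]; linarith [hri₀m']]
      exact ⟨p, hp0, hsupp, hdeg, hmass⟩

theorem stmt3 (n : ℕ) (hn : 3 ≤ n) (q : Fin n → ℝ) (hq : ∀ i, q i ∈ Set.Icc (0 : ℝ) 1) :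
    IsGreatest
      {s : ℝ | ∃ p : Finset (Fin n) → ℝ, (∀ I, 0 ≤ p I) ∧
        (∀ i, ∑ I ∈ Finset.univ.filter
            (fun I : Finset (Fin n) => 2 ≤ I.card ∧ I.card ≤ n - 1 ∧ i ∈ I), p I ≤ q i) ∧
        s = ∑ I ∈ Finset.univ.filter
            (fun I : Finset (Fin n) => 2 ≤ I.card ∧ I.card ≤ n - 1), ((I.card : ℝ) - 1) * p I}
      (min (((n : ℝ) - 2) / ((n : ℝ) - 1) * ∑ i, q i)
        ((∑ i, q i) - Finset.univ.sup' (Finset.univ_nonempty_iff.mpr ⟨⟨0, by omega⟩⟩) q)) := by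
  classical
  obtain ⟨i', -, hsup⟩ :=
    Finset.exists_mem_eq_sup' (Finset.univ_nonempty_iff.mpr (⟨⟨0, by omega⟩⟩ : Nonempty (Fin n))) q
  rw [hsup]
  set Q := ∑ i, q i with hQdef
  have hq0 : ∀ i, 0 ≤ q i := fun i => (hq i).1
  have hQ0 : 0 ≤ Q := Finset.sum_nonneg fun i _ => hq0 i
  have hmax : ∀ i, q i ≤ q i' := by
    intro i
    rw [← hsup]
    exact Finset.le_sup' q (mem_univ i)
  have hn1 : (0:ℝ) < (n:ℝ) - 1 := by
    have : (3:ℝ) ≤ (n:ℝ) := by exact_mod_cast hn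
    linarith
  have hn2 : (0:ℝ) ≤ (n:ℝ) - 2 := by
    have : (3:ℝ) ≤ (n:ℝ) := by exact_mod_cast hn
    linarith
  have hcQ : Q - q i' = ∑ i ∈ Finset.univ.erase i', q i := by
    rw [Finset.sum_erase_eq_sub (mem_univ i'), hQdef]
  constructor
  · -- membership
    show ∃ p : Finset (Fin n) → ℝ, _
    rcases le_total Q (((n:ℝ) - 1) * q i') with hA | hB
    · -- Case A : min = Q - q i'
      have hminA : min (((n:ℝ) - 2) / ((n:ℝ) - 1) * Q) (Q - q i') = Q - q i' := by
        apply min_eq_right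
        rw [div_mul_eq_mul_div, le_div_iff₀ hn1]
        nlinarith
      have hcard : (Finset.univ.erase i').card = n - 1 := by
        rw [Finset.card_erase_of_mem (mem_univ i'), Finset.card_univ, Fintype.card_fin]
      obtain ⟨p', hp'0, hp'supp, hp'deg, hp'mass⟩ :=
        lemD (n - 1) (Finset.univ.erase i') hcard (q i') (hq0 i') q
          (fun i _ => hq0 i) (fun i _ => hmax i)
          (by
            rw [← hcQ]
            have : ((n - 1 : ℕ) : ℝ) = (n:ℝ) - 1 := by
              rw [Nat.cast_sub (by omega)]; simp
            rw [this]
            nlinarith)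
      have hi'J : ∀ J, p' J ≠ 0 → i' ∉ J := by
        intro J hJ h
        exact (Finset.mem_erase.mp ((hp'supp J hJ).1 h)).1 rfl
      refine ⟨fun I => if i' ∈ I then p' (I.erase i') else 0, ?_, ?_, ?_⟩
      · intro I; dsimp only; split
        · exact hp'0 _
        · exact le_rfl
      · intro i
        rw [reindex2 i' p' (fun I : Finset (Fin n) => 2 ≤ I.card ∧ I.card ≤ n - 1 ∧ i ∈ I)]
        by_cases hi : i = i'
        · subst hi
          calc ∑ J ∈ (Finset.univ : Finset (Finset (Fin n))),
                (if i ∉ J ∧ 2 ≤ (insert i J).card ∧ (insert i J).card ≤ n - 1 ∧ i ∈ insert i J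
                  then p' J else 0)
              ≤ ∑ J ∈ (Finset.univ : Finset (Finset (Fin n))), p' J := by
                apply Finset.sum_le_sum
                intro J _
                split
                · exact le_rfl
                · exact hp'0 J
            _ ≤ q i := hp'mass
        · have hiS : i ∈ Finset.univ.erase i' := Finset.mem_erase.mpr ⟨hi, mem_univ i⟩
          apply le_of_eq
          rw [← hp'deg i hiS, Finset.sum_filter]
          apply Finset.sum_congr rfl
          intro J _
          by_cases hz : p' J = 0
          · simp [hz]
          · obtain ⟨hsub, hne, hcard2⟩ := hp'supp J hz
            have hi'nJ : i' ∉ J := hi'J J hz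
            have hcardJ : (insert i' J).card = J.card + 1 :=
              Finset.card_insert_of_notMem hi'nJ
            have h2 : 2 ≤ (insert i' J).card := by
              rw [hcardJ]
              have := Finset.card_pos.mpr hne
              omega
            have h3 : (insert i' J).card ≤ n - 1 := by rw [hcardJ]; omega
            have hmemi : i ∈ insert i' J ↔ i ∈ J := by simp [Finset.mem_insert, hi]
            by_cases hiJ : i ∈ J
            · rw [if_pos ⟨hi'nJ, h2, h3, hmemi.mpr hiJ⟩, if_pos hiJ]
            · rw [if_neg, if_neg hiJ]
              rintro ⟨-, -, -, h⟩
              exact hiJ (hmemi.mp h)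
      · rw [hminA]
        have hrw : ∀ I : Finset (Fin n),
            ((I.card : ℝ) - 1) * (if i' ∈ I then p' (I.erase i') else 0)
              = (if i' ∈ I then (fun J : Finset (Fin n) => (J.card : ℝ) * p' J) (I.erase i')
                  else 0) := by
          intro I
          by_cases h : i' ∈ I
          · simp only [h, if_true]
            rw [Finset.card_erase_of_mem h,
              Nat.cast_sub (Finset.card_pos.mpr ⟨i', h⟩)]
            push_cast; ring
          · simp [h]
        rw [Finset.sum_congr rfl (fun I _ => hrw I),
          reindex2 i' (fun J : Finset (Fin n) => (J.card : ℝ) * p' J)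
            (fun I : Finset (Fin n) => 2 ≤ I.card ∧ I.card ≤ n - 1)]
        have e1 : ∑ J ∈ (Finset.univ : Finset (Finset (Fin n))),
            (if i' ∉ J ∧ 2 ≤ (insert i' J).card ∧ (insert i' J).card ≤ n - 1
              then ((J.card : ℝ)) * p' J else 0)
            = ∑ J ∈ (Finset.univ : Finset (Finset (Fin n))), ((J.card : ℝ)) * p' J := by
          apply Finset.sum_congr rfl
          intro J _
          by_cases hz : p' J = 0
          · simp [hz]
          · obtain ⟨hsub, hne, hcard2⟩ := hp'supp J hz
            have hi'nJ : i' ∉ J := hi'J J hz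
            have hcardJ : (insert i' J).card = J.card + 1 :=
              Finset.card_insert_of_notMem hi'nJ
            have h2 : 2 ≤ (insert i' J).card := by
              rw [hcardJ]
              have := Finset.card_pos.mpr hne
              omega
            have h3 : (insert i' J).card ≤ n - 1 := by rw [hcardJ]; omega
            rw [if_pos ⟨hi'nJ, h2, h3⟩]
        rw [e1]
        have e2 : ∑ J ∈ (Finset.univ : Finset (Finset (Fin n))), ((J.card : ℝ)) * p' J
            = ∑ i ∈ Finset.univ.erase i',
                ∑ J ∈ Finset.univ.filter (fun J : Finset (Fin n) => i ∈ J), p' J := by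
          have hc : ∀ J : Finset (Fin n), ((J.card : ℝ)) * p' J
              = ∑ i ∈ Finset.univ, (if i ∈ J then p' J else 0) := by
            intro J
            rw [← Finset.sum_filter, Finset.filter_mem_eq_inter, Finset.univ_inter,
              Finset.sum_const, nsmul_eq_mul]
          rw [Finset.sum_congr rfl (fun J _ => hc J), Finset.sum_comm]
          rw [← Finset.sum_erase_add Finset.univ _ (mem_univ i')]
          have hz : ∑ J ∈ (Finset.univ : Finset (Finset (Fin n))),
              (if i' ∈ J then p' J else 0) = 0 := by
            apply Finset.sum_eq_zero
            intro J _
            by_cases h : i' ∈ J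
            · simp only [h, if_true]
              by_contra hz
              exact hi'J J hz h
            · simp [h]
          rw [hz, add_zero]
          apply Finset.sum_congr rfl
          intro i _
          rw [Finset.sum_filter]
        rw [e2]
        rw [hcQ]
        apply Finset.sum_congr rfl
        intro i hi
        exact (hp'deg i hi).symm
    · -- Case B : min = (n-2)/(n-1) * Q
      have hminB : min (((n:ℝ) - 2) / ((n:ℝ) - 1) * Q) (Q - q i')
          = ((n:ℝ) - 2) / ((n:ℝ) - 1) * Q := by
        apply min_eq_left
        rw [div_mul_eq_mul_div, div_le_iff₀ hn1]
        nlinarith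
      set x : Fin n → ℝ := fun j => Q / ((n:ℝ) - 1) - q j with hxdef
      have hx0 : ∀ j, 0 ≤ x j := by
        intro j
        have h1 : q j ≤ Q / ((n:ℝ) - 1) := by
          rw [le_div_iff₀ hn1]
          nlinarith [hmax j]
        simp only [hxdef]
        linarith
      have hX : ∑ j, x j = Q / ((n:ℝ) - 1) := by
        simp only [hxdef]
        rw [Finset.sum_sub_distrib, Finset.sum_const, Finset.card_univ, Fintype.card_fin,
          nsmul_eq_mul, ← hQdef]
        field_simp
        ring
      set p : Finset (Fin n) → ℝ :=
        fun I => ∑ j ∈ Finset.univ, if I = Finset.univ.erase j then x j else 0 with hpdef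
      have hp0 : ∀ I, 0 ≤ p I := by
        intro I
        apply Finset.sum_nonneg
        intro j _
        split
        · exact hx0 j
        · exact le_rfl
      have hcardE : ∀ j : Fin n, (Finset.univ.erase j).card = n - 1 := by
        intro j
        rw [Finset.card_erase_of_mem (mem_univ j), Finset.card_univ, Fintype.card_fin]
      have hswap : ∀ (P : Finset (Fin n) → Prop) [DecidablePred P] (f : Finset (Fin n) → ℝ),
          ∑ I ∈ Finset.univ.filter P, f I * p I
            = ∑ j ∈ Finset.univ,
                if P (Finset.univ.erase j) then f (Finset.univ.erase j) * x j else 0 := by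
        intro P _ f
        rw [Finset.sum_filter]
        have h1 : ∀ I : Finset (Fin n), (if P I then f I * p I else 0)
            = ∑ j ∈ Finset.univ,
                (if I = Finset.univ.erase j then (if P I then f I * x j else 0) else 0) := by
          intro I
          by_cases hP : P I
          · simp only [hP, if_true]
            rw [hpdef, Finset.mul_sum]
            apply Finset.sum_congr rfl
            intro j _
            by_cases h : I = Finset.univ.erase j <;> simp [h]
          · simp only [hP, if_false]
            symm
            apply Finset.sum_eq_zero
            intro j _
            simp [hP]
        rw [Finset.sum_congr rfl (fun I _ => h1 I), Finset.sum_comm]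
        apply Finset.sum_congr rfl
        intro j _
        rw [Finset.sum_ite_eq' Finset.univ (Finset.univ.erase j)
          (fun I => if P I then f I * x j else 0)]
        simp
      refine ⟨p, hp0, ?_, ?_⟩
      · intro i
        have h0 : ∑ I ∈ Finset.univ.filter
              (fun I : Finset (Fin n) => 2 ≤ I.card ∧ I.card ≤ n - 1 ∧ i ∈ I), p I
            = ∑ I ∈ Finset.univ.filter
              (fun I : Finset (Fin n) => 2 ≤ I.card ∧ I.card ≤ n - 1 ∧ i ∈ I),
                (fun _ : Finset (Fin n) => (1:ℝ)) I * p I := by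
          apply Finset.sum_congr rfl
          intro I _
          rw [one_mul]
        rw [h0, hswap (fun I : Finset (Fin n) => 2 ≤ I.card ∧ I.card ≤ n - 1 ∧ i ∈ I)
          (fun _ => (1:ℝ))]
        have h1 : ∀ j : Fin n,
            (if 2 ≤ (Finset.univ.erase j).card ∧ (Finset.univ.erase j).card ≤ n - 1
                ∧ i ∈ Finset.univ.erase j then (1:ℝ) * x j else 0)
              = x j - (if j = i then x j else 0) := by
          intro j
          rcases eq_or_ne j i with rfl | hji
          · simp [Finset.mem_erase]
          · have : i ∈ Finset.univ.erase j := Finset.mem_erase.mpr ⟨(Ne.symm hji), mem_univ i⟩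
            rw [hcardE j]
            simp only [this, hji, if_false, and_true, if_true]
            have h2 : 2 ≤ n - 1 ∧ n - 1 ≤ n - 1 := ⟨by omega, le_rfl⟩
            rw [if_pos h2, one_mul, sub_zero]
        rw [Finset.sum_congr rfl (fun j _ => h1 j), Finset.sum_sub_distrib, hX,
          Finset.sum_ite_eq' Finset.univ i x, if_pos (mem_univ i)]
        simp only [hxdef]
        apply le_of_eq
        ring
      · rw [hminB,
          hswap (fun I : Finset (Fin n) => 2 ≤ I.card ∧ I.card ≤ n - 1)
            (fun I : Finset (Fin n) => (I.card : ℝ) - 1)]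
        have h1 : ∀ j : Fin n,
            (if 2 ≤ (Finset.univ.erase j).card ∧ (Finset.univ.erase j).card ≤ n - 1
                then (((Finset.univ.erase j).card : ℝ) - 1) * x j else 0)
              = ((n:ℝ) - 2) * x j := by
          intro j
          rw [hcardE j, if_pos ⟨by omega, le_rfl⟩]
          have : ((n - 1 : ℕ) : ℝ) = (n:ℝ) - 1 := by
            rw [Nat.cast_sub (by omega)]; simp
          rw [this]
          ring
        rw [Finset.sum_congr rfl (fun j _ => h1 j), ← Finset.mul_sum, hX]
        ring
  · -- upper bound
    rintro s ⟨p, hp0, hple, hs⟩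
    set F := Finset.univ.filter
      (fun I : Finset (Fin n) => 2 ≤ I.card ∧ I.card ≤ n - 1) with hF
    have hdouble : ∀ T : Finset (Fin n),
        ∑ I ∈ F, ((I ∩ T).card : ℝ) * p I
          = ∑ i ∈ T, ∑ I ∈ Finset.univ.filter
              (fun I : Finset (Fin n) => 2 ≤ I.card ∧ I.card ≤ n - 1 ∧ i ∈ I), p I := by
      intro T
      have hcard : ∀ I : Finset (Fin n), ((I ∩ T).card : ℝ) = ∑ i ∈ T, if i ∈ I then 1 else 0 := by
        intro I
        rw [← Finset.sum_filter, Finset.filter_mem_eq_inter, Finset.inter_comm]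
        simp
      have h1 : ∀ I : Finset (Fin n), ((I ∩ T).card : ℝ) * p I
          = ∑ i ∈ T, if i ∈ I then p I else 0 := by
        intro I
        rw [hcard, Finset.sum_mul]
        apply Finset.sum_congr rfl
        intro i _
        by_cases h : i ∈ I <;> simp [h]
      rw [Finset.sum_congr rfl (fun I _ => h1 I), Finset.sum_comm]
      apply Finset.sum_congr rfl
      intro i _
      rw [← Finset.sum_filter, hF, Finset.filter_filter]
      apply Finset.sum_congr ?_ (fun _ _ => rfl)
      apply Finset.filter_congr
      intro I _
      simp [and_assoc]
    have hbound2 : s ≤ Q - q i' := by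
      rw [hs, hcQ]
      calc ∑ I ∈ F, ((I.card : ℝ) - 1) * p I
          ≤ ∑ I ∈ F, ((I ∩ Finset.univ.erase i').card : ℝ) * p I := by
            apply Finset.sum_le_sum
            intro I hI
            rw [hF, Finset.mem_filter] at hI
            apply mul_le_mul_of_nonneg_right _ (hp0 I)
            have hIE : I ∩ Finset.univ.erase i' = I.erase i' := by
              ext x; simp [and_comm]
            rw [hIE]
            by_cases h : i' ∈ I
            · rw [Finset.card_erase_of_mem h]
              have h2 : 2 ≤ I.card := hI.2.1
              rw [Nat.cast_sub (by omega)]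
              simp
            · rw [Finset.erase_eq_of_notMem h]
              simp
        _ = ∑ i ∈ Finset.univ.erase i', ∑ I ∈ Finset.univ.filter
              (fun I : Finset (Fin n) => 2 ≤ I.card ∧ I.card ≤ n - 1 ∧ i ∈ I), p I :=
            hdouble _
        _ ≤ ∑ i ∈ Finset.univ.erase i', q i := Finset.sum_le_sum fun i _ => hple i
    have hbound1 : s ≤ ((n:ℝ) - 2) / ((n:ℝ) - 1) * Q := by
      rw [hs]
      calc ∑ I ∈ F, ((I.card : ℝ) - 1) * p I
          ≤ ∑ I ∈ F, (((n:ℝ) - 2) / ((n:ℝ) - 1) * (I.card : ℝ)) * p I := by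
            apply Finset.sum_le_sum
            intro I hI
            rw [hF, Finset.mem_filter] at hI
            apply mul_le_mul_of_nonneg_right _ (hp0 I)
            have hcle : (I.card : ℝ) ≤ (n:ℝ) - 1 := by
              have h := hI.2.2
              have : ((n - 1 : ℕ) : ℝ) = (n:ℝ) - 1 := by
                rw [Nat.cast_sub (by omega)]; simp
              rw [← this]
              exact_mod_cast h
            rw [div_mul_eq_mul_div, le_div_iff₀ hn1]
            nlinarith
        _ = ((n:ℝ) - 2) / ((n:ℝ) - 1) * ∑ I ∈ F, (I.card : ℝ) * p I := by
            rw [Finset.mul_sum]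
            apply Finset.sum_congr rfl
            intro I _; ring
        _ ≤ ((n:ℝ) - 2) / ((n:ℝ) - 1) * Q := by
            apply mul_le_mul_of_nonneg_left _ (div_nonneg hn2 (le_of_lt hn1))
            have : ∑ I ∈ F, ((I.card : ℝ)) * p I
                = ∑ i ∈ Finset.univ, ∑ I ∈ Finset.univ.filter
                  (fun I : Finset (Fin n) => 2 ≤ I.card ∧ I.card ≤ n - 1 ∧ i ∈ I), p I := by
              rw [← hdouble Finset.univ]
              apply Finset.sum_congr rfl
              intro I _
              rw [Finset.inter_univ]
            rw [this, hQdef]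
            exact Finset.sum_le_sum fun i _ => hple i
    exact le_min hbound1 hbound2
end

section
/- If each q_i in [0,1] and sum_{i=1}^n q_i <= n - 1, then there exists a probability measure on [0,infinity)^n \ (0,infinity)^n (the boundary of the non-negative orthant) whose i-th marginal survival probability at 0 equals q_i for each i. Consequently, for prescribed marginal distributions F_1,...,F_n on [0,infinity), a jointly exclusive random vector with these marginals exists if and only if sum_i (1 - F_i(0)) <= n - 1. -/
open MeasureTheory Set
open scoped ENNReal

lemma arc_set_eq (a r : ℝ) (h1 : r ≤ 1) :
    {t : ℝ | Int.fract (t - a) < r} ∩ Ico (0:ℝ) 1 =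
      Ico (Int.fract a) (min (Int.fract a + r) 1) ∪ Ico 0 (Int.fract a + r - 1) := by
  have ha0 := Int.fract_nonneg a
  have ha1 := Int.fract_lt_one a
  have hfr : ∀ t : ℝ, Int.fract (t - a) = Int.fract (t - Int.fract a) := by
    intro t
    have : t - a = t - Int.fract a - (⌊a⌋ : ℝ) := by rw [Int.fract]; ring
    rw [this, Int.fract_sub_intCast]
  ext t
  constructor
  · rintro ⟨hlt, h0, h2⟩
    rw [Set.mem_setOf_eq, hfr] at hlt
    rcases le_or_gt (Int.fract a) t with h | h
    · left
      rw [Int.fract_eq_self.mpr ⟨by linarith, by linarith⟩] at hlt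
      exact ⟨h, lt_min (by linarith) h2⟩
    · right
      rw [show t - Int.fract a = (t - Int.fract a + 1) - ((1:ℤ):ℝ) by push_cast; ring,
        Int.fract_sub_intCast, Int.fract_eq_self.mpr ⟨by linarith, by linarith⟩] at hlt
      exact ⟨h0, by linarith⟩
  · rintro (⟨h1', h2'⟩ | ⟨h1', h2'⟩)
    · obtain ⟨ha, hb⟩ := lt_min_iff.mp h2'
      refine ⟨?_, by linarith, hb⟩
      rw [Set.mem_setOf_eq, hfr, Int.fract_eq_self.mpr ⟨by linarith, by linarith⟩]
      linarith
    · refine ⟨?_, h1', by linarith⟩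
      rw [Set.mem_setOf_eq, hfr,
        show t - Int.fract a = (t - Int.fract a + 1) - ((1:ℤ):ℝ) by push_cast; ring,
        Int.fract_sub_intCast, Int.fract_eq_self.mpr ⟨by linarith, by linarith⟩]
      linarith

lemma arc_measurable (a r : ℝ) : MeasurableSet {t : ℝ | Int.fract (t - a) < r} :=
  measurableSet_lt (measurable_fract.comp (measurable_id.sub measurable_const))
    measurable_const

lemma arc_measure (a r : ℝ) (h0 : 0 ≤ r) (h1 : r ≤ 1) :
    (volume.restrict (Ico (0:ℝ) 1)) {t | Int.fract (t - a) < r} = ENNReal.ofReal r := by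
  have ha0 := Int.fract_nonneg a
  have ha1 := Int.fract_lt_one a
  rw [Measure.restrict_apply (arc_measurable a r), arc_set_eq a r h1]
  have hdisj : Disjoint (Ico (Int.fract a) (min (Int.fract a + r) 1))
      (Ico (0:ℝ) (Int.fract a + r - 1)) := by
    rw [Set.disjoint_left]
    rintro x ⟨hx1, _⟩ ⟨_, hx2⟩
    linarith
  rw [measure_union hdisj measurableSet_Ico, Real.volume_Ico, Real.volume_Ico]
  rcases le_or_gt (Int.fract a + r) 1 with h | h
  · rw [min_eq_left h]
    rw [show ENNReal.ofReal (Int.fract a + r - 1 - 0) = 0 from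
      ENNReal.ofReal_eq_zero.mpr (by linarith)]
    rw [add_zero]
    congr 1
    ring
  · rw [min_eq_right h.le]
    rw [← ENNReal.ofReal_add (by linarith) (by linarith)]
    congr 1
    ring


lemma construct (n : ℕ) (hn : 2 ≤ n) (ν : Fin n → Measure ℝ)
    (hp : ∀ i, IsProbabilityMeasure (ν i)) (hneg : ∀ i, ν i (Set.Iio 0) = 0)
    (hsum : ∑ i, (ν i (Set.Ioi 0)).toReal ≤ (n : ℝ) - 1) :
    ∃ μ : Measure (Fin n → ℝ), IsProbabilityMeasure μ ∧
      μ {x | ∀ i, 0 < x i} = 0 ∧ ∀ i, μ.map (fun x => x i) = ν i := by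
  classical
  set q : Fin n → ℝ := fun i => (ν i (Set.Ioi 0)).toReal with hqdef
  have hfin : ∀ i, ν i (Set.Ioi 0) ≠ ⊤ := fun i => measure_ne_top _ _
  have hq0 : ∀ i, 0 ≤ q i := fun i => ENNReal.toReal_nonneg
  have hq1 : ∀ i, q i ≤ 1 := by
    intro i
    have h := ENNReal.toReal_mono (by simp) (prob_le_one (μ := ν i) (s := Set.Ioi 0))
    simpa using h
  have hofReal : ∀ i, ENNReal.ofReal (q i) = ν i (Set.Ioi 0) := fun i =>
    ENNReal.ofReal_toReal (hfin i)
  -- partial sums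
  set Qf : ℕ → ℝ := fun k => if h : k < n then q ⟨k, h⟩ else 0 with hQf
  set S : ℕ → ℝ := fun k => ∑ j ∈ Finset.range k, Qf j with hS
  have hQf0 : ∀ k, 0 ≤ Qf k := by
    intro k; by_cases h : k < n <;> simp [hQf, h, hq0]
  have hQfi : ∀ i : Fin n, Qf i.val = q i := by
    intro i; simp [hQf, i.isLt]
  have hSmono : Monotone S := fun a b hab =>
    Finset.sum_le_sum_of_subset_of_nonneg (Finset.range_subset_range.mpr hab)
      (fun k _ _ => hQf0 k)
  have hS0 : ∀ k, 0 ≤ S k := by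
    intro k
    have := hSmono (Nat.zero_le k)
    simpa [hS] using this
  have hSsucc : ∀ k, S (k + 1) = S k + Qf k := fun k => Finset.sum_range_succ _ k
  have hSn : S n ≤ (n : ℝ) - 1 := by
    have : S n = ∑ i : Fin n, q i := by
      show (∑ j ∈ Finset.range n, Qf j) = ∑ i : Fin n, q i
      rw [← Fin.sum_univ_eq_sum_range]
      exact Finset.sum_congr rfl fun i _ => by rw [hQfi]
    rw [this]; exact hsum
  -- conditional measures
  set nu' : Fin n → Measure ℝ := fun i =>
    if ν i (Set.Ioi 0) = 0 then Measure.dirac 1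
    else (ν i (Set.Ioi 0))⁻¹ • (ν i).restrict (Set.Ioi 0) with hnu'
  have hnu'prob : ∀ i, IsProbabilityMeasure (nu' i) := by
    intro i
    by_cases h : ν i (Set.Ioi 0) = 0
    · rw [hnu']; simp only [if_pos h]; infer_instance
    · refine ⟨?_⟩
      rw [hnu']
      simp only [if_neg h, Measure.smul_apply,
        Measure.restrict_apply MeasurableSet.univ, Set.univ_inter, smul_eq_mul]
      exact ENNReal.inv_mul_cancel h (hfin i)
  -- decomposition
  have hIic : ∀ i, ν i (Set.Iic 0) = ENNReal.ofReal (1 - q i) := by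
    intro i
    have h := prob_compl_eq_one_sub (μ := ν i) (measurableSet_Ioi : MeasurableSet (Ioi (0:ℝ)))
    rw [Set.compl_Ioi] at h
    rw [h, ← hofReal i, ← ENNReal.ofReal_one, ← ENNReal.ofReal_sub _ (hq0 i)]
  have hrestIic : ∀ i, (ν i).restrict (Set.Iic 0) = (ν i (Set.Iic 0)) • Measure.dirac 0 := by
    intro i
    refine Measure.ext fun s hs => ?_
    rw [Measure.restrict_apply hs, Measure.smul_apply, Measure.dirac_apply' _ hs,
      smul_eq_mul]
    by_cases h0 : (0:ℝ) ∈ s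
    · rw [Set.indicator_of_mem h0, Pi.one_apply, mul_one]
      refine le_antisymm (measure_mono Set.inter_subset_right) ?_
      have hsub : Set.Iic (0:ℝ) ⊆ (s ∩ Set.Iic 0) ∪ Set.Iio 0 := by
        intro x hx
        rcases eq_or_lt_of_le (Set.mem_Iic.mp hx) with h | h
        · exact Or.inl ⟨h ▸ h0, hx⟩
        · exact Or.inr h
      calc ν i (Set.Iic 0) ≤ ν i ((s ∩ Set.Iic 0) ∪ Set.Iio 0) := measure_mono hsub
        _ ≤ ν i (s ∩ Set.Iic 0) + ν i (Set.Iio 0) := measure_union_le _ _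
        _ = ν i (s ∩ Set.Iic 0) := by rw [hneg i, add_zero]
    · rw [Set.indicator_of_notMem h0, mul_zero]
      refine measure_mono_null (fun x hx => ?_) (hneg i)
      rcases eq_or_lt_of_le (Set.mem_Iic.mp hx.2) with h | h
      · exact absurd (h ▸ hx.1) h0
      · exact h
  have hrestIoi : ∀ i, (ν i).restrict (Set.Ioi 0) = ENNReal.ofReal (q i) • nu' i := by
    intro i
    by_cases h : ν i (Set.Ioi 0) = 0
    · rw [Measure.restrict_eq_zero.mpr h, hofReal i, h, zero_smul]
    · rw [hnu']
      simp only [if_neg h]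
      rw [smul_smul, hofReal i, ENNReal.mul_inv_cancel h (hfin i), one_smul]
  have hdec : ∀ i, ν i = ENNReal.ofReal (q i) • nu' i
      + ENNReal.ofReal (1 - q i) • Measure.dirac 0 := by
    intro i
    conv_lhs => rw [← Measure.restrict_add_restrict_compl (μ := ν i) (measurableSet_Ioi : MeasurableSet (Ioi (0:ℝ)))]
    rw [Set.compl_Ioi, hrestIoi i, hrestIic i, hIic i]
  -- base measures
  set P : Measure ℝ := volume.restrict (Set.Ico (0:ℝ) 1) with hP
  haveI hPprob : IsProbabilityMeasure P := ⟨by rw [hP]; simp [Real.volume_Ico]⟩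
  haveI : ∀ i, IsProbabilityMeasure (nu' i) := hnu'prob
  set Qm : Measure (Fin n → ℝ) := Measure.pi nu' with hQm
  haveI : IsProbabilityMeasure Qm := by rw [hQm]; infer_instance
  set f : ℝ × (Fin n → ℝ) → (Fin n → ℝ) :=
    fun p i => if Int.fract (p.1 - S i.val) < q i then p.2 i else 0 with hf
  have hgm : ∀ i : Fin n, Measurable (fun p : ℝ × (Fin n → ℝ) =>
      if Int.fract (p.1 - S i.val) < q i then p.2 i else 0) := by
    intro i
    exact Measurable.ite (measurable_fst (arc_measurable (S i.val) (q i)))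
      ((measurable_pi_apply i).comp measurable_snd) measurable_const
  have hfm : Measurable f := by
    rw [measurable_pi_iff]
    intro i
    exact hgm i
  refine ⟨Measure.map f (P.prod Qm), Measure.isProbabilityMeasure_map hfm.aemeasurable, ?_, ?_⟩
  · -- exclusivity
    have hmeas_pos : MeasurableSet {x : Fin n → ℝ | ∀ i, 0 < x i} := by
      have : {x : Fin n → ℝ | ∀ i, 0 < x i} = ⋂ i, (fun x => x i) ⁻¹' Set.Ioi 0 := by
        ext x; simp
      rw [this]
      exact MeasurableSet.iInter fun i => (measurable_pi_apply i) measurableSet_Ioi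
    rw [Measure.map_apply hfm hmeas_pos]
    have hsub : f ⁻¹' {x | ∀ i, 0 < x i} ⊆
        {t : ℝ | ∀ i : Fin n, Int.fract (t - S i.val) < q i} ×ˢ Set.univ := by
      rintro ⟨t, y⟩ hp
      refine ⟨fun i => ?_, trivial⟩
      have h := hp i
      by_contra hcon
      simp only [hf, Set.mem_setOf_eq] at h
      rw [if_neg hcon] at h
      exact lt_irrefl 0 h
    refine measure_mono_null hsub ?_
    have hmeasT : MeasurableSet {t : ℝ | ∀ i : Fin n, Int.fract (t - S i.val) < q i} := by
      have : {t : ℝ | ∀ i : Fin n, Int.fract (t - S i.val) < q i}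
          = ⋂ i : Fin n, {t : ℝ | Int.fract (t - S i.val) < q i} := by ext t; simp
      rw [this]
      exact MeasurableSet.iInter fun i => arc_measurable _ _
    rw [Measure.prod_prod]
    have hPzero : P {t : ℝ | ∀ i : Fin n, Int.fract (t - S i.val) < q i} = 0 := by
      rw [hP, Measure.restrict_apply hmeasT]
      have : {t : ℝ | ∀ i : Fin n, Int.fract (t - S i.val) < q i} ∩ Set.Ico 0 1 = ∅ := by
        rw [Set.eq_empty_iff_forall_notMem]
        rintro t ⟨hall, ht0, ht1⟩
        set m : Fin n → ℤ := fun i => -⌊t - S i.val⌋ with hm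
        have hfrm : ∀ i : Fin n, Int.fract (t - S i.val) = t - S i.val + m i := by
          intro i; rw [hm, Int.fract]; push_cast; ring
        have hlow : ∀ i : Fin n, S i.val ≤ t + m i := by
          intro i
          have h1 := Int.fract_nonneg (t - S i.val)
          rw [hfrm i] at h1; linarith
        have hup : ∀ i : Fin n, t + m i < S (i.val + 1) := by
          intro i
          have h1 := hall i
          rw [hfrm i] at h1
          rw [hSsucc, hQfi]
          linarith
        have hm0 : ∀ i, 0 ≤ m i := by
          intro i
          have h1 : (-1 : ℝ) < (m i : ℝ) := by
            have := hlow i; have := hS0 i.val; linarith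
          have : (-1 : ℤ) < m i := by exact_mod_cast h1
          omega
        have hm2 : ∀ i, m i ≤ (n : ℤ) - 2 := by
          intro i
          have h1 : (m i : ℝ) < (n : ℝ) - 1 := by
            have h2 := hup i
            have h3 : S (i.val + 1) ≤ S n := hSmono i.isLt
            linarith [hSn]
          have : (m i : ℝ) < ((n : ℤ) : ℝ) - 1 := by push_cast; linarith
          have h4 : m i < (n : ℤ) - 1 := by exact_mod_cast (by push_cast at this ⊢; linarith : (m i : ℝ) < (((n : ℤ) - 1 : ℤ) : ℝ))
          omega
        have hinj : Function.Injective m := by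
          intro i j hij
          by_contra hne
          have key : ∀ a b : Fin n, a < b → (m a : ℝ) < m b := by
            intro a b hab
            have h1 : a.val + 1 ≤ b.val := hab
            have h2 : S (a.val + 1) ≤ S b.val := hSmono h1
            have := hup a; have := hlow b
            linarith
          rcases lt_trichotomy i j with h | h | h
          · have := key i j h; rw [hij] at this; exact lt_irrefl _ this
          · exact hne h
          · have := key j i h; rw [hij] at this; exact lt_irrefl _ this
        have hrange : ∀ i ∈ Finset.univ, m i ∈ Finset.Icc (0 : ℤ) ((n : ℤ) - 2) :=
          fun i _ => Finset.mem_Icc.mpr ⟨hm0 i, hm2 i⟩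
        have hcard := Finset.card_le_card_of_injOn m hrange (hinj.injOn)
        rw [Finset.card_univ, Fintype.card_fin, Int.card_Icc] at hcard
        omega
      rw [this, measure_empty]
    rw [hPzero, zero_mul]
  · -- marginals
    intro i
    rw [Measure.map_map (measurable_pi_apply i) hfm]
    have hcomp : (fun x : Fin n → ℝ => x i) ∘ f
        = fun p : ℝ × (Fin n → ℝ) => if Int.fract (p.1 - S i.val) < q i then p.2 i else 0 := rfl
    rw [hcomp]
    refine Measure.ext fun s hs => ?_
    rw [Measure.map_apply (hgm i) hs]
    set A := {t : ℝ | Int.fract (t - S i.val) < q i} with hA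
    set E := (fun y : Fin n → ℝ => y i) ⁻¹' s with hE
    have hEm : MeasurableSet E := (measurable_pi_apply i) hs
    have hQE : Qm E = nu' i s := by
      rw [hQm, hE,
        show (fun y : Fin n → ℝ => y i) ⁻¹' s
          = Set.pi Set.univ (Function.update (fun _ => Set.univ) i s) from Set.eval_preimage,
        Measure.pi_pi]
      rw [Finset.prod_eq_single i (fun j _ hj => by
        rw [Function.update_of_ne hj]; exact measure_univ) (by simp)]
      rw [Function.update_self]
    have hPA : P A = ENNReal.ofReal (q i) := arc_measure (S i.val) (q i) (hq0 i) (hq1 i)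
    have hnu_s := congrArg (fun μ : Measure ℝ => μ s) (hdec i)
    simp only [Measure.add_apply, Measure.smul_apply, smul_eq_mul] at hnu_s
    rw [Measure.dirac_apply' _ hs] at hnu_s
    by_cases h0 : (0:ℝ) ∈ s
    · have hpre : (fun p : ℝ × (Fin n → ℝ) =>
          if Int.fract (p.1 - S i.val) < q i then p.2 i else 0) ⁻¹' s
          = (A ×ˢ E) ∪ (Aᶜ ×ˢ Set.univ) := by
        ext ⟨t, y⟩
        by_cases hc : Int.fract (t - S i.val) < q i
        · simp [hA, hE, hc]
        · simp [hA, hE, hc, h0]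
      rw [hpre, measure_union ?_ ((arc_measurable _ _).compl.prod MeasurableSet.univ),
        Measure.prod_prod, Measure.prod_prod, measure_univ, mul_one, hPA, hQE,
        prob_compl_eq_one_sub (arc_measurable _ _), hPA]
      · rw [hnu_s, Set.indicator_of_mem h0, Pi.one_apply, mul_one]
        congr 1
        rw [← ENNReal.ofReal_one, ← ENNReal.ofReal_sub _ (hq0 i)]
      · rw [Set.disjoint_left]
        rintro ⟨t, y⟩ ⟨ht, _⟩ ⟨ht', _⟩
        exact ht' ht
    · have hpre : (fun p : ℝ × (Fin n → ℝ) =>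
          if Int.fract (p.1 - S i.val) < q i then p.2 i else 0) ⁻¹' s = A ×ˢ E := by
        ext ⟨t, y⟩
        by_cases hc : Int.fract (t - S i.val) < q i
        · simp [hA, hE, hc]
        · simp [hA, hE, hc, h0]
      rw [hpre, Measure.prod_prod, hPA, hQE, hnu_s, Set.indicator_of_notMem h0,
        mul_zero, add_zero]


theorem stmt6 (n : ℕ) (hn : 2 ≤ n) (q : Fin n → ℝ) (hq : ∀ i, q i ∈ Set.Icc (0 : ℝ) 1)
    (hsum : ∑ i, q i ≤ (n : ℝ) - 1) :
    (∃ μ : Measure (Fin n → ℝ), IsProbabilityMeasure μ ∧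
      μ {x | ∃ i, x i < 0} = 0 ∧
      μ {x | ∀ i, 0 < x i} = 0 ∧
      ∀ i, (μ {x | 0 < x i}).toReal = q i)
    ∧
    (∀ ν : Fin n → Measure ℝ, (∀ i, IsProbabilityMeasure (ν i)) →
      (∀ i, ν i (Set.Iio 0) = 0) →
      ((∃ μ : Measure (Fin n → ℝ), IsProbabilityMeasure μ ∧
          μ {x | ∀ i, 0 < x i} = 0 ∧
          ∀ i, μ.map (fun x => x i) = ν i)
        ↔ ∑ i, (ν i (Set.Ioi 0)).toReal ≤ (n : ℝ) - 1)) := by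
  constructor
  · -- part 1
    set b : Fin n → Measure ℝ := fun i =>
      ENNReal.ofReal (1 - q i) • Measure.dirac 0 + ENNReal.ofReal (q i) • Measure.dirac 1
      with hb
    have hbprob : ∀ i, IsProbabilityMeasure (b i) := by
      intro i
      refine ⟨?_⟩
      rw [hb]
      simp only [Measure.add_apply, Measure.smul_apply, measure_univ, smul_eq_mul, mul_one]
      rw [← ENNReal.ofReal_add (by linarith [(hq i).2]) (hq i).1]
      norm_num
    have hbneg : ∀ i, b i (Set.Iio 0) = 0 := by
      intro i
      rw [hb]
      simp only [Measure.add_apply, Measure.smul_apply, smul_eq_mul]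
      rw [Measure.dirac_apply' _ measurableSet_Iio, Measure.dirac_apply' _ measurableSet_Iio]
      rw [Set.indicator_of_notMem (by simp), Set.indicator_of_notMem (by simp)]
      simp
    have hbIoi : ∀ i, b i (Set.Ioi 0) = ENNReal.ofReal (q i) := by
      intro i
      rw [hb]
      simp only [Measure.add_apply, Measure.smul_apply, smul_eq_mul]
      rw [Measure.dirac_apply' _ measurableSet_Ioi, Measure.dirac_apply' _ measurableSet_Ioi]
      rw [Set.indicator_of_notMem (by simp), Set.indicator_of_mem (by norm_num)]
      simp
    obtain ⟨μ, hμp, hμ2, hμ3⟩ := construct n hn b hbprob hbneg (by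
      have : ∀ i : Fin n, (b i (Set.Ioi 0)).toReal = q i := by
        intro i; rw [hbIoi i, ENNReal.toReal_ofReal (hq i).1]
      rw [Finset.sum_congr rfl fun i _ => this i]
      exact hsum)
    refine ⟨μ, hμp, ?_, hμ2, ?_⟩
    · have hset : {x : Fin n → ℝ | ∃ i, x i < 0} = ⋃ i, (fun x => x i) ⁻¹' Set.Iio 0 := by
        ext x; simp
      rw [hset]
      refine measure_iUnion_null fun i => ?_
      rw [← Measure.map_apply (measurable_pi_apply i) measurableSet_Iio, hμ3 i]
      exact hbneg i
    · intro i
      have : μ {x | 0 < x i} = μ ((fun x : Fin n → ℝ => x i) ⁻¹' Set.Ioi 0) := rfl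
      rw [this, ← Measure.map_apply (measurable_pi_apply i) measurableSet_Ioi, hμ3 i,
        hbIoi i, ENNReal.toReal_ofReal (hq i).1]
  · -- part 2
    intro ν hνp hνneg
    constructor
    · rintro ⟨μ, hμp, hμ2, hμ3⟩
      have hIic : ∀ i, ν i (Set.Iic 0) = 1 - ν i (Set.Ioi 0) := by
        intro i
        have h := prob_compl_eq_one_sub (μ := ν i)
          (measurableSet_Ioi : MeasurableSet (Ioi (0:ℝ)))
        rw [Set.compl_Ioi] at h
        exact h
      have hcover : (Set.univ : Set (Fin n → ℝ)) ⊆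
          {x | ∀ i, 0 < x i} ∪ ⋃ i, (fun x => x i) ⁻¹' Set.Iic 0 := by
        intro x _
        by_cases h : ∀ i, 0 < x i
        · exact Or.inl h
        · push_neg at h
          obtain ⟨i, hi⟩ := h
          exact Or.inr (Set.mem_iUnion.mpr ⟨i, hi⟩)
      have hμIic : ∀ i : Fin n, μ ((fun x : Fin n → ℝ => x i) ⁻¹' Set.Iic 0)
          = ν i (Set.Iic 0) := by
        intro i
        rw [← Measure.map_apply (measurable_pi_apply i) measurableSet_Iic, hμ3 i]
      have key : (1 : ℝ≥0∞) ≤ ∑ i, ν i (Set.Iic 0) := by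
        calc (1 : ℝ≥0∞) = μ Set.univ := (measure_univ).symm
          _ ≤ μ ({x | ∀ i, 0 < x i} ∪ ⋃ i, (fun x => x i) ⁻¹' Set.Iic 0) :=
            measure_mono hcover
          _ ≤ μ {x | ∀ i, 0 < x i} + μ (⋃ i, (fun x => x i) ⁻¹' Set.Iic 0) :=
            measure_union_le _ _
          _ = μ (⋃ i, (fun x => x i) ⁻¹' Set.Iic 0) := by rw [hμ2, zero_add]
          _ ≤ ∑ i, μ ((fun x : Fin n → ℝ => x i) ⁻¹' Set.Iic 0) := measure_iUnion_fintype_le _ _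
          _ = ∑ i, ν i (Set.Iic 0) := Finset.sum_congr rfl fun i _ => hμIic i
      have hsum_ne : (∑ i, ν i (Set.Iic 0)) ≠ ⊤ :=
        ENNReal.sum_ne_top.mpr fun i _ => measure_ne_top _ _
      have key2 : (1 : ℝ) ≤ (∑ i, ν i (Set.Iic 0)).toReal := by
        have := ENNReal.toReal_mono hsum_ne key
        simpa using this
      rw [ENNReal.toReal_sum (fun i _ => measure_ne_top _ _)] at key2
      have htr : ∀ i : Fin n, (ν i (Set.Iic 0)).toReal = 1 - (ν i (Set.Ioi 0)).toReal := by
        intro i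
        rw [hIic i, ENNReal.toReal_sub_of_le prob_le_one (by simp)]
        simp
      rw [Finset.sum_congr rfl fun i _ => htr i, Finset.sum_sub_distrib] at key2
      simp only [Finset.sum_const, Finset.card_univ, Fintype.card_fin, nsmul_eq_mul,
        mul_one] at key2
      linarith
    · intro h
      exact construct n hn ν hνp hνneg h
end

section
/- A non-negative random vector (X_1,...,X_n) is jointly exclusive if and only if E[ prod_{i=1}^n (exp(i t_i X_i) - 1) ] = 0 for all (t_1,...,t_n) in R^n, where i denotes the imaginary unit; equivalently the joint characteristic function satisfies phi_N(t) = (-1)^{n-1} ( 1 - sum_i phi_i(t_i) + sum_{I in M} (-1)^{|I|} phi_I(t_I) ). -/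
open MeasureTheory

namespace Stmt7Aux

open Complex

variable {Ω : Type*} [MeasurableSpace Ω] {μ : Measure Ω} [IsProbabilityMeasure μ]

lemma meas_exp {f : Ω → ℝ} (hf : Measurable f) :
    Measurable (fun ω => Complex.exp (Complex.I * (f ω : ℂ))) :=
  Complex.measurable_exp.comp (measurable_const.mul (Complex.measurable_ofReal.comp hf))

lemma norm_exp_I_mul (y : ℝ) : ‖Complex.exp (Complex.I * (y : ℂ))‖ = 1 := by
  rw [mul_comm]
  simp [Complex.norm_exp_ofReal_mul_I]

lemma int_exp {f : Ω → ℝ} (hf : Measurable f) :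
    Integrable (fun ω => Complex.exp (Complex.I * (f ω : ℂ))) μ := by
  refine Integrable.mono' (integrable_const 1) (meas_exp hf).aestronglyMeasurable ?_
  filter_upwards with ω
  rw [norm_exp_I_mul]

lemma int_prod {n : ℕ} {g : Fin n → Ω → ℝ} (hg : ∀ i, Measurable (g i)) (s : Finset (Fin n)) :
    Integrable (fun ω => ∏ i ∈ s, (Complex.exp (Complex.I * (g i ω : ℂ)) - 1)) μ := by
  refine Integrable.mono' (integrable_const ((2 : ℝ) ^ s.card))
    (Finset.measurable_prod s fun i _ => (meas_exp (hg i)).sub measurable_const).aestronglyMeasurable ?_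
  filter_upwards with ω
  rw [norm_prod]
  calc ∏ i ∈ s, ‖Complex.exp (Complex.I * (g i ω : ℂ)) - 1‖
      ≤ ∏ _i ∈ s, (2 : ℝ) := by
        refine Finset.prod_le_prod (fun i _ => norm_nonneg _) (fun i _ => ?_)
        calc ‖Complex.exp (Complex.I * (g i ω : ℂ)) - 1‖
            ≤ ‖Complex.exp (Complex.I * (g i ω : ℂ))‖ + ‖(1 : ℂ)‖ := norm_sub_le _ _
          _ ≤ 2 := by rw [norm_exp_I_mul]; norm_num
    _ = 2 ^ s.card := by rw [Finset.prod_const]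

lemma expand {n : ℕ} (X : Fin n → Ω → ℝ) (hmeas : ∀ i, Measurable (X i)) (t : Fin n → ℝ) :
    ∫ ω, ∏ i, (Complex.exp (Complex.I * ((t i * X i ω : ℝ) : ℂ)) - 1) ∂μ
      = ∑ S : Finset (Fin n), (-1 : ℂ) ^ (n - S.card) *
          ∫ ω, Complex.exp (Complex.I * ((∑ i ∈ S, t i * X i ω : ℝ) : ℂ)) ∂μ := by
  have hmS : ∀ S : Finset (Fin n), Measurable (fun ω => ∑ i ∈ S, t i * X i ω) := by
    intro S
    exact Finset.measurable_sum S fun i _ => measurable_const.mul (hmeas i)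
  have key : ∀ ω, ∏ i, (Complex.exp (Complex.I * ((t i * X i ω : ℝ) : ℂ)) - 1)
      = ∑ S : Finset (Fin n), (-1 : ℂ) ^ (n - S.card) *
          Complex.exp (Complex.I * ((∑ i ∈ S, t i * X i ω : ℝ) : ℂ)) := by
    intro ω
    have h := Finset.prod_add (fun i => Complex.exp (Complex.I * ((t i * X i ω : ℝ) : ℂ)))
      (fun _ => (-1 : ℂ)) Finset.univ
    rw [Finset.powerset_univ] at h
    simp only [sub_eq_add_neg]
    rw [h]
    refine Finset.sum_congr rfl fun S _ => ?_
    rw [Finset.prod_const, Finset.card_sdiff_of_subset (Finset.subset_univ S), Finset.card_univ,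
      Fintype.card_fin, mul_comm]
    congr 1
    rw [← Complex.exp_sum]
    congr 1
    push_cast
    rw [Finset.mul_sum]
  calc ∫ ω, ∏ i, (Complex.exp (Complex.I * ((t i * X i ω : ℝ) : ℂ)) - 1) ∂μ
      = ∫ ω, ∑ S : Finset (Fin n), (-1 : ℂ) ^ (n - S.card) *
          Complex.exp (Complex.I * ((∑ i ∈ S, t i * X i ω : ℝ) : ℂ)) ∂μ := by
        exact integral_congr_ae (Filter.Eventually.of_forall key)
    _ = ∑ S : Finset (Fin n), ∫ ω, (-1 : ℂ) ^ (n - S.card) *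
          Complex.exp (Complex.I * ((∑ i ∈ S, t i * X i ω : ℝ) : ℂ)) ∂μ := by
        exact integral_finset_sum _ fun S _ => (int_exp (hmS S)).const_mul _
    _ = _ := by
        refine Finset.sum_congr rfl fun S _ => ?_
        exact integral_const_mul _ _

lemma decomp {n : ℕ} (hn : 2 ≤ n) (φ : Finset (Fin n) → ℂ) :
    ∑ S : Finset (Fin n), (-1 : ℂ) ^ S.card * φ S
      = φ ∅ - (∑ i, φ {i})
        + (∑ I ∈ Finset.univ.filter (fun I : Finset (Fin n) => 2 ≤ I.card ∧ I.card ≤ n - 1),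
            (-1 : ℂ) ^ I.card * φ I)
        + (-1 : ℂ) ^ n * φ Finset.univ := by
  classical
  haveI : Nonempty (Fin n) := ⟨⟨0, by omega⟩⟩
  set p : Finset (Fin n) → Prop := fun I => 2 ≤ I.card ∧ I.card ≤ n - 1 with hp
  have hsplit := Finset.sum_filter_add_sum_filter_not Finset.univ p
    (fun S : Finset (Fin n) => (-1 : ℂ) ^ S.card * φ S)
  rw [← hsplit]
  have hE : Finset.univ.filter (fun I => ¬ p I)
      = insert (∅ : Finset (Fin n)) (insert Finset.univ
          (Finset.univ.image fun i : Fin n => ({i} : Finset (Fin n)))) := by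
    ext S
    simp only [Finset.mem_filter, Finset.mem_univ, true_and, Finset.mem_insert,
      Finset.mem_image, hp]
    constructor
    · intro hS
      have hcard : S.card ≤ n := by
        have := Finset.card_le_univ S
        simpa using this
      have : S.card = 0 ∨ S.card = 1 ∨ S.card = n := by omega
      rcases this with h0 | h1 | hne
      · exact Or.inl (Finset.card_eq_zero.mp h0)
      · rcases Finset.card_eq_one.mp h1 with ⟨a, ha⟩
        exact Or.inr (Or.inr ⟨a, ha.symm⟩)
      · refine Or.inr (Or.inl ?_)
        rw [← Finset.card_eq_iff_eq_univ]
        simpa using hne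
    · rintro (rfl | rfl | ⟨a, rfl⟩)
      · simp
      · simp only [Finset.card_univ, Fintype.card_fin]
        omega
      · simp only [Finset.card_singleton]
        omega
  rw [hE]
  have h1 : (∅ : Finset (Fin n)) ∉ insert Finset.univ
      (Finset.univ.image fun i : Fin n => ({i} : Finset (Fin n))) := by
    simp only [Finset.mem_insert, Finset.mem_image, not_or, not_exists]
    constructor
    · intro h
      have := congrArg Finset.card h
      simp only [Finset.card_empty, Finset.card_univ, Fintype.card_fin] at this
      omega
    · intro a h
      have := congrArg Finset.card h.2
      simp at this
  have h2 : (Finset.univ : Finset (Fin n)) ∉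
      Finset.univ.image fun i : Fin n => ({i} : Finset (Fin n)) := by
    simp only [Finset.mem_image, not_exists]
    intro a h
    have := congrArg Finset.card h.2
    simp only [Finset.card_singleton, Finset.card_univ, Fintype.card_fin] at this
    omega
  rw [Finset.sum_insert h1, Finset.sum_insert h2, Finset.sum_image
    (fun x _ y _ h => Finset.singleton_injective h)]
  simp only [Finset.card_empty, pow_zero, one_mul, Finset.card_univ, Fintype.card_fin,
    Finset.card_singleton, pow_one, neg_one_mul]
  rw [Finset.sum_neg_distrib]
  ring

lemma phi_empty {n : ℕ} (X : Fin n → Ω → ℝ) (t : Fin n → ℝ) :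
    ∫ ω, Complex.exp (Complex.I * ((∑ i ∈ (∅ : Finset (Fin n)), t i * X i ω : ℝ) : ℂ)) ∂μ
      = 1 := by
  simp

lemma per_t {n : ℕ} (hn : 2 ≤ n) (X : Fin n → Ω → ℝ) (hmeas : ∀ i, Measurable (X i))
    (t : Fin n → ℝ) :
    (∫ ω, ∏ i, (Complex.exp (Complex.I * ((t i * X i ω : ℝ) : ℂ)) - 1) ∂μ = 0)
      ↔ (∫ ω, Complex.exp (Complex.I * ((∑ i, t i * X i ω : ℝ) : ℂ)) ∂μ)
          = (-1 : ℂ) ^ (n - 1) *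
            (1 - (∑ i, ∫ ω, Complex.exp (Complex.I * ((t i * X i ω : ℝ) : ℂ)) ∂μ)
              + ∑ I ∈ Finset.univ.filter
                  (fun I : Finset (Fin n) => 2 ≤ I.card ∧ I.card ≤ n - 1),
                  (-1 : ℂ) ^ I.card *
                    ∫ ω, Complex.exp (Complex.I * ((∑ i ∈ I, t i * X i ω : ℝ) : ℂ)) ∂μ) := by
  classical
  set φ : Finset (Fin n) → ℂ :=
    fun S => ∫ ω, Complex.exp (Complex.I * ((∑ i ∈ S, t i * X i ω : ℝ) : ℂ)) ∂μ with hφ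
  have hsign : ∀ S : Finset (Fin n), (-1 : ℂ) ^ (n - S.card) = (-1) ^ n * (-1) ^ S.card := by
    intro S
    have hc : S.card ≤ n := by
      have := Finset.card_le_univ S
      simpa using this
    have hsq : ((-1 : ℂ)) ^ S.card * ((-1 : ℂ)) ^ S.card = 1 := by
      rw [← pow_add, ← two_mul, pow_mul]
      norm_num
    have hn' : (-1 : ℂ) ^ n = (-1) ^ (n - S.card) * (-1) ^ S.card := by
      rw [← pow_add, Nat.sub_add_cancel hc]
    rw [hn', mul_assoc, hsq, mul_one]
  have hexp := expand (μ := μ) X hmeas t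
  rw [hexp]
  have hsum : ∑ S : Finset (Fin n), (-1 : ℂ) ^ (n - S.card) * φ S
      = (-1 : ℂ) ^ n * ∑ S : Finset (Fin n), (-1 : ℂ) ^ S.card * φ S := by
    rw [Finset.mul_sum]
    refine Finset.sum_congr rfl fun S _ => ?_
    rw [hsign S, mul_assoc]
  rw [hsum, decomp hn φ]
  have hempty : φ ∅ = 1 := phi_empty X t
  have hsingle : ∀ i, φ {i} = ∫ ω, Complex.exp (Complex.I * ((t i * X i ω : ℝ) : ℂ)) ∂μ := by
    intro i
    simp [hφ]
  have huniv : φ Finset.univ = ∫ ω, Complex.exp (Complex.I * ((∑ i, t i * X i ω : ℝ) : ℂ)) ∂μ := rfl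
  rw [hempty]
  simp only [← hsingle, ← huniv]
  have hpow : (-1 : ℂ) ^ (n - 1) = -((-1 : ℂ) ^ n) := by
    obtain ⟨m, rfl⟩ : ∃ m, n = m + 1 := ⟨n - 1, by omega⟩
    simp only [Nat.add_sub_cancel, pow_succ]
    ring
  rw [hpow]
  set c : ℂ := (-1 : ℂ) ^ n with hc
  have hsq : c * c = 1 := by
    rw [hc, ← pow_add, ← two_mul, pow_mul]
    norm_num
  set K := 1 - (∑ i, φ {i}) + ∑ I ∈ Finset.univ.filter
    (fun I : Finset (Fin n) => 2 ≤ I.card ∧ I.card ≤ n - 1), (-1 : ℂ) ^ I.card * φ I with hK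
  constructor
  · intro h
    linear_combination h - φ Finset.univ * hsq
  · intro h
    linear_combination (c * c) * h - c * K * hsq

lemma forward {n : ℕ} (X : Fin n → Ω → ℝ)
    (hnonneg : ∀ᵐ ω ∂μ, ∀ i, 0 ≤ X i ω)
    (h : μ {ω | ∀ i, 0 < X i ω} = 0) (t : Fin n → ℝ) :
    ∫ ω, ∏ i, (Complex.exp (Complex.I * ((t i * X i ω : ℝ) : ℂ)) - 1) ∂μ = 0 := by
  apply integral_eq_zero_of_ae
  have h' : ∀ᵐ ω ∂μ, ¬ ∀ i, 0 < X i ω := by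
    rw [ae_iff]
    simpa only [not_not] using h
  filter_upwards [h', hnonneg] with ω hω hpos
  push_neg at hω
  obtain ⟨i, hi⟩ := hω
  have hXi : X i ω = 0 := le_antisymm hi (hpos i)
  show ∏ j, (Complex.exp (Complex.I * ((t j * X j ω : ℝ) : ℂ)) - 1) = 0
  refine Finset.prod_eq_zero (Finset.mem_univ i) ?_
  rw [hXi]
  simp

lemma converse {n : ℕ} (hn : 2 ≤ n) (X : Fin n → Ω → ℝ) (hmeas : ∀ i, Measurable (X i))
    (hnonneg : ∀ᵐ ω ∂μ, ∀ i, 0 ≤ X i ω)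
    (H : ∀ t : Fin n → ℝ,
      ∫ ω, ∏ i, (Complex.exp (Complex.I * ((t i * X i ω : ℝ) : ℂ)) - 1) ∂μ = 0) :
    μ {ω | ∀ i, 0 < X i ω} = 0 := by
  classical
  -- Step 1: for every t, a.e. the cosine product vanishes
  have step1 : ∀ t : Fin n → ℝ, ∀ᵐ ω ∂μ, ∏ i, (1 - Real.cos (t i * X i ω)) = 0 := by
    intro t
    have hfac : ∀ y : ℝ, (1 : ℂ) - Complex.cos (y : ℂ)
        = (-(1/2) : ℂ) * ((Complex.exp (Complex.I * (y : ℂ)) - 1)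
            + (Complex.exp (Complex.I * ((-y : ℝ) : ℂ)) - 1)) := by
      intro y
      rw [Complex.cos]
      push_cast
      ring
    have key : ∀ ω, ∏ i, ((1 : ℂ) - Complex.cos ((t i * X i ω : ℝ) : ℂ))
        = (-(1/2) : ℂ) ^ n * ∑ S : Finset (Fin n),
            ∏ i, (Complex.exp (Complex.I *
              (((if i ∈ S then t i else -t i) * X i ω : ℝ) : ℂ)) - 1) := by
      intro ω
      calc ∏ i, ((1 : ℂ) - Complex.cos ((t i * X i ω : ℝ) : ℂ))
          = ∏ i, ((-(1/2) : ℂ) * ((Complex.exp (Complex.I * ((t i * X i ω : ℝ) : ℂ)) - 1)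
              + (Complex.exp (Complex.I * ((-(t i * X i ω) : ℝ) : ℂ)) - 1))) := by
            refine Finset.prod_congr rfl fun i _ => ?_
            exact hfac (t i * X i ω)
        _ = (-(1/2) : ℂ) ^ n * ∏ i, ((Complex.exp (Complex.I * ((t i * X i ω : ℝ) : ℂ)) - 1)
              + (Complex.exp (Complex.I * ((-(t i * X i ω) : ℝ) : ℂ)) - 1)) := by
            rw [Finset.prod_mul_distrib, Finset.prod_const, Finset.card_univ, Fintype.card_fin]
        _ = (-(1/2) : ℂ) ^ n * ∑ S : Finset (Fin n),
              ∏ i, (Complex.exp (Complex.I *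
                (((if i ∈ S then t i else -t i) * X i ω : ℝ) : ℂ)) - 1) := by
            congr 1
            rw [Finset.prod_add, Finset.powerset_univ]
            refine Finset.sum_congr rfl fun S _ => ?_
            rw [← Finset.prod_mul_prod_compl S (fun i => Complex.exp (Complex.I *
                (((if i ∈ S then t i else -t i) * X i ω : ℝ) : ℂ)) - 1),
              Finset.compl_eq_univ_sdiff]
            congr 1
            · refine Finset.prod_congr rfl fun i hi => ?_
              rw [if_pos hi]
            · refine Finset.prod_congr rfl fun i hi => ?_
              rw [Finset.mem_sdiff] at hi
              rw [if_neg hi.2]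
              norm_num
    have hC : ∫ ω, ∏ i, ((1 : ℂ) - Complex.cos ((t i * X i ω : ℝ) : ℂ)) ∂μ = 0 := by
      rw [integral_congr_ae (Filter.Eventually.of_forall key)]
      rw [integral_const_mul]
      have hzero : ∀ S : Finset (Fin n),
          ∫ ω, ∏ i, (Complex.exp (Complex.I *
            (((if i ∈ S then t i else -t i) * X i ω : ℝ) : ℂ)) - 1) ∂μ = 0 := by
        intro S
        exact H (fun i => if i ∈ S then t i else -t i)
      rw [integral_finset_sum]
      · rw [Finset.sum_eq_zero fun S _ => hzero S, mul_zero]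
      · intro S _
        exact int_prod (g := fun i ω => (if i ∈ S then t i else -t i) * X i ω)
          (fun i => measurable_const.mul (hmeas i)) Finset.univ
    have hR : ∫ ω, (∏ i, (1 - Real.cos (t i * X i ω))) ∂μ = 0 := by
      have hofReal : ((∫ ω, (∏ i, (1 - Real.cos (t i * X i ω))) ∂μ : ℝ) : ℂ)
          = ∫ ω, ((∏ i, (1 - Real.cos (t i * X i ω)) : ℝ) : ℂ) ∂μ := integral_ofReal.symm
      have hcast : ((∫ ω, (∏ i, (1 - Real.cos (t i * X i ω))) ∂μ : ℝ) : ℂ) = 0 := by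
        rw [hofReal, ← hC]
        refine integral_congr_ae (Filter.Eventually.of_forall fun ω => ?_)
        push_cast
        rfl
      exact_mod_cast hcast
    have hnn : 0 ≤ fun ω => ∏ i, (1 - Real.cos (t i * X i ω)) := by
      intro ω
      exact Finset.prod_nonneg fun i _ => sub_nonneg.2 (Real.cos_le_one _)
    have hint : Integrable (fun ω => ∏ i, (1 - Real.cos (t i * X i ω))) μ := by
      refine Integrable.mono' (integrable_const ((2 : ℝ) ^ n))
        (Finset.measurable_prod _ fun i _ =>
          (measurable_const.sub (Real.measurable_cos.comp
            (measurable_const.mul (hmeas i))))).aestronglyMeasurable ?_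
      filter_upwards with ω
      rw [Real.norm_eq_abs, Finset.abs_prod]
      calc ∏ i, |1 - Real.cos (t i * X i ω)|
          ≤ ∏ _i : Fin n, (2 : ℝ) := by
            refine Finset.prod_le_prod (fun i _ => abs_nonneg _) (fun i _ => ?_)
            rw [abs_le]
            constructor <;> nlinarith [Real.cos_le_one (t i * X i ω),
              Real.neg_one_le_cos (t i * X i ω)]
        _ = 2 ^ n := by simp
    have := (integral_eq_zero_iff_of_nonneg hnn hint).mp hR
    filter_upwards [this] with ω hω
    exact hω
  -- Step 2: combine over rationals
  have hae : ∀ᵐ ω ∂μ, ∀ q : ℚ, ∏ i, (1 - Real.cos ((q : ℝ) * X i ω)) = 0 :=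
    ae_all_iff.2 fun q => step1 (fun _ => (q : ℝ))
  have final : ∀ᵐ ω ∂μ, ¬ ∀ i, 0 < X i ω := by
    haveI : Nonempty (Fin n) := ⟨⟨0, by omega⟩⟩
    filter_upwards [hae, hnonneg] with ω h1 h2
    intro hpos
    set B : ℝ := ∑ i, X i ω with hB
    have hBpos : 0 < B := by
      have : ∀ i ∈ Finset.univ, 0 < X i ω := fun i _ => hpos i
      refine Finset.sum_pos this ?_
      exact Finset.univ_nonempty
    have hle : ∀ i, X i ω ≤ B := by
      intro i
      exact Finset.single_le_sum (fun j _ => h2 j) (Finset.mem_univ i)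
    obtain ⟨q, hq0, hqlt⟩ := exists_rat_btwn (div_pos Real.two_pi_pos hBpos)
    have hq0' : (0 : ℝ) < q := hq0
    have hbound : ∀ i, (q : ℝ) * X i ω < 2 * Real.pi := by
      intro i
      calc (q : ℝ) * X i ω ≤ (q : ℝ) * B := by
            exact mul_le_mul_of_nonneg_left (hle i) hq0'.le
        _ < (2 * Real.pi / B) * B := by
            exact mul_lt_mul_of_pos_right hqlt hBpos
        _ = 2 * Real.pi := div_mul_cancel₀ _ hBpos.ne'
    have := h1 q
    rw [Finset.prod_eq_zero_iff] at this
    obtain ⟨i, -, hi⟩ := this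
    have hcos : Real.cos ((q : ℝ) * X i ω) = 1 := by linarith
    have hpos' : 0 < (q : ℝ) * X i ω := mul_pos hq0' (hpos i)
    have := (Real.cos_eq_one_iff_of_lt_of_lt (by linarith [Real.two_pi_pos]) (hbound i)).mp hcos
    linarith
  rw [ae_iff] at final
  refine measure_mono_null ?_ final
  intro ω hω
  simpa using hω

end Stmt7Aux

open Stmt7Aux

theorem stmt7 {Ω : Type*} [MeasurableSpace Ω] (μ : Measure Ω) [IsProbabilityMeasure μ]
    (n : ℕ) (hn : 2 ≤ n) (X : Fin n → Ω → ℝ) (hmeas : ∀ i, Measurable (X i))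
    (hnonneg : ∀ᵐ ω ∂μ, ∀ i, 0 ≤ X i ω) :
    (μ {ω | ∀ i, 0 < X i ω} = 0 ↔
      ∀ t : Fin n → ℝ,
        ∫ ω, ∏ i, (Complex.exp (Complex.I * ((t i * X i ω : ℝ) : ℂ)) - 1) ∂μ = 0)
    ∧
    (μ {ω | ∀ i, 0 < X i ω} = 0 ↔
      ∀ t : Fin n → ℝ,
        (∫ ω, Complex.exp (Complex.I * ((∑ i, t i * X i ω : ℝ) : ℂ)) ∂μ)
          = (-1 : ℂ) ^ (n - 1) *
            (1 - (∑ i, ∫ ω, Complex.exp (Complex.I * ((t i * X i ω : ℝ) : ℂ)) ∂μ)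
              + ∑ I ∈ Finset.univ.filter
                  (fun I : Finset (Fin n) => 2 ≤ I.card ∧ I.card ≤ n - 1),
                  (-1 : ℂ) ^ I.card *
                    ∫ ω, Complex.exp (Complex.I * ((∑ i ∈ I, t i * X i ω : ℝ) : ℂ)) ∂μ)) := by
  have h1 : μ {ω | ∀ i, 0 < X i ω} = 0 ↔
      ∀ t : Fin n → ℝ,
        ∫ ω, ∏ i, (Complex.exp (Complex.I * ((t i * X i ω : ℝ) : ℂ)) - 1) ∂μ = 0 :=
    ⟨fun h t => forward X hnonneg h t, fun h => converse hn X hmeas hnonneg h⟩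
  refine ⟨h1, h1.trans (forall_congr' fun t => per_t hn X hmeas t)⟩
end

section
/- If X is a jointly exclusive non-negative random vector, then for all x in [0,infinity)^n, its CDF satisfies F_N(x) = 1 - sum_i F̄_i(x_i) + sum_{I in M} (-1)^{|I|} F̄_I(x_I), where F̄_I denotes the joint survival function of the subvector indexed by I. -/
open MeasureTheory

lemma ie_aux {Ω ι : Type*} [MeasurableSpace Ω] [DecidableEq ι] (A : ι → Set Ω)
    (hA : ∀ i, MeasurableSet (A i)) (s : Finset ι) :
    ∀ (μ : Measure Ω), IsFiniteMeasure μ →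
    (μ (⋂ i ∈ s, (A i)ᶜ)).toReal
      = ∑ I ∈ s.powerset, (-1:ℝ)^I.card * (μ (⋂ i ∈ I, A i)).toReal := by
  classical
  induction s using Finset.induction with
  | empty => intro μ _; simp
  | @insert a s ha ih =>
    intro μ hfin
    have hBm : ∀ I : Finset ι, MeasurableSet (⋂ i ∈ I, A i) := fun I =>
      MeasurableSet.biInter I.countable_toSet (fun i _ => hA i)
    have hT : MeasurableSet (⋂ i ∈ s, (A i)ᶜ) :=
      MeasurableSet.biInter s.countable_toSet (fun i _ => (hA i).compl)
    set T := ⋂ i ∈ s, (A i)ᶜ with hTdef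
    have hsplit : μ (T \ A a) + μ (T ∩ A a) = μ T := measure_diff_add_inter T (hA a)
    have hne : ∀ S : Set Ω, μ S ≠ ⊤ := fun S => measure_ne_top μ S
    have hsplit' : (μ (T \ A a)).toReal = (μ T).toReal - (μ (T ∩ A a)).toReal := by
      have := congrArg ENNReal.toReal hsplit
      rw [ENNReal.toReal_add (hne _) (hne _)] at this
      linarith
    have hLHS : (⋂ i ∈ insert a s, (A i)ᶜ) = T \ A a := by
      rw [Finset.set_biInter_insert]
      rw [Set.inter_comm, Set.diff_eq]
    have hrest : (μ (T ∩ A a)).toReal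
        = ∑ I ∈ s.powerset, (-1:ℝ)^I.card * (μ (⋂ i ∈ insert a I, A i)).toReal := by
      have h1 := ih (μ.restrict (A a)) (inferInstance)
      have h2 : μ.restrict (A a) T = μ (T ∩ A a) := Measure.restrict_apply hT
      rw [h2] at h1
      rw [h1]
      refine Finset.sum_congr rfl fun I hI => ?_
      rw [Measure.restrict_apply (hBm I)]
      congr 2
      rw [Finset.set_biInter_insert, Set.inter_comm]
    rw [hLHS, hsplit', ih μ hfin, hrest, Finset.sum_powerset_insert ha]
    have : ∀ I ∈ s.powerset, (-1:ℝ)^(insert a I).card * (μ (⋂ i ∈ insert a I, A i)).toReal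
        = -((-1:ℝ)^I.card * (μ (⋂ i ∈ insert a I, A i)).toReal) := by
      intro I hI
      have haI : a ∉ I := fun h => ha (Finset.mem_powerset.mp hI h)
      rw [Finset.card_insert_of_notMem haI, pow_succ]
      ring
    rw [Finset.sum_congr rfl this, Finset.sum_neg_distrib]
    ring

theorem stmt8 {Ω : Type*} [MeasurableSpace Ω] (μ : Measure Ω) [IsProbabilityMeasure μ]
    (n : ℕ) (hn : 2 ≤ n) (X : Fin n → Ω → ℝ) (hmeas : ∀ i, Measurable (X i))
    (hnonneg : ∀ᵐ ω ∂μ, ∀ i, 0 ≤ X i ω)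
    (hJE : μ {ω | ∀ i, 0 < X i ω} = 0)
    (x : Fin n → ℝ) (hx : ∀ i, 0 ≤ x i) :
    (μ {ω | ∀ i, X i ω ≤ x i}).toReal
      = 1 - (∑ i, (μ {ω | x i < X i ω}).toReal)
        + ∑ I ∈ Finset.univ.filter
            (fun I : Finset (Fin n) => 2 ≤ I.card ∧ I.card ≤ n - 1),
            (-1 : ℝ) ^ I.card * (μ {ω | ∀ i ∈ I, x i < X i ω}).toReal := by
  classical
  set A : Fin n → Set Ω := fun i => {ω | x i < X i ω} with hA
  have hAm : ∀ i, MeasurableSet (A i) := fun i => measurableSet_lt measurable_const (hmeas i)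
  have hset : {ω | ∀ i, X i ω ≤ x i} = ⋂ i ∈ (Finset.univ : Finset (Fin n)), (A i)ᶜ := by
    ext ω; simp [A, not_lt]
  have key := ie_aux A hAm Finset.univ μ inferInstance
  rw [hset, key]
  have hBset : ∀ I : Finset (Fin n), (⋂ i ∈ I, A i) = {ω | ∀ i ∈ I, x i < X i ω} := by
    intro I; ext ω; simp [A]
  -- f I
  set f : Finset (Fin n) → ℝ := fun I => (-1:ℝ)^I.card * (μ (⋂ i ∈ I, A i)).toReal with hf
  have hfuniv : f Finset.univ = 0 := by
    have hsub : (⋂ i, A i) ⊆ {ω | ∀ i, 0 < X i ω} := by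
      intro ω hω i
      exact lt_of_le_of_lt (hx i) (Set.mem_iInter.mp hω i)
    have h0 : μ (⋂ i, A i) = 0 := measure_mono_null hsub hJE
    simp [f, h0]
  rw [Finset.powerset_univ]
  rw [← Finset.sum_filter_add_sum_filter_not Finset.univ
    (fun I : Finset (Fin n) => 2 ≤ I.card ∧ I.card ≤ n - 1) f]
  have hcard : Fintype.card (Fin n) = n := Fintype.card_fin n
  have hQ : Finset.univ.filter (fun I : Finset (Fin n) => ¬(2 ≤ I.card ∧ I.card ≤ n-1))
      = insert ∅ (insert Finset.univ ((Finset.univ : Finset (Fin n)).image fun i => {i})) := by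
    ext I
    constructor
    · intro hI
      have h := (Finset.mem_filter.mp hI).2
      rw [Finset.mem_insert, Finset.mem_insert]
      by_cases h2 : 2 ≤ I.card
      · have hle : I.card ≤ n := by simpa [hcard] using I.card_le_univ
        have hIc : I.card = n := by omega
        right; left
        exact I.card_eq_iff_eq_univ.mp (by simpa [hcard] using hIc)
      · have hc : I.card = 0 ∨ I.card = 1 := by omega
        rcases hc with hc | hc
        · left; exact Finset.card_eq_zero.mp hc
        · right; right
          obtain ⟨i, hi⟩ := Finset.card_eq_one.mp hc
          exact Finset.mem_image.mpr ⟨i, Finset.mem_univ i, hi.symm⟩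
    · intro hI
      rw [Finset.mem_filter]
      refine ⟨Finset.mem_univ I, ?_⟩
      rw [Finset.mem_insert, Finset.mem_insert] at hI
      rcases hI with rfl | rfl | hI
      · simp
      · rw [Finset.card_univ, hcard]; omega
      · obtain ⟨i, -, rfl⟩ := Finset.mem_image.mp hI
        simp
  have h1 : (∅ : Finset (Fin n)) ∉
      insert Finset.univ ((Finset.univ : Finset (Fin n)).image fun i => {i}) := by
    intro hmem
    rcases Finset.mem_insert.mp hmem with h | h
    · have := congrArg Finset.card h
      rw [Finset.card_empty, Finset.card_univ, hcard] at this
      omega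
    · obtain ⟨i, -, hi⟩ := Finset.mem_image.mp h
      exact Finset.singleton_ne_empty i hi
  have h2 : (Finset.univ : Finset (Fin n)) ∉
      (Finset.univ : Finset (Fin n)).image (fun i => ({i} : Finset (Fin n))) := by
    intro hmem
    obtain ⟨i, -, hi⟩ := Finset.mem_image.mp hmem
    have := congrArg Finset.card hi
    rw [Finset.card_singleton, Finset.card_univ, hcard] at this
    omega
  have hsum2 : ∑ I ∈ Finset.univ.filter
      (fun I : Finset (Fin n) => ¬(2 ≤ I.card ∧ I.card ≤ n-1)), f I
      = 1 - ∑ i, (μ (A i)).toReal := by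
    rw [hQ, Finset.sum_insert h1, Finset.sum_insert h2, hfuniv,
      Finset.sum_image (fun a _ b _ h => Finset.singleton_injective h)]
    have hfe : f ∅ = 1 := by simp [f]
    have hfs : ∀ i, f {i} = -(μ (A i)).toReal := by
      intro i; simp [f]
    rw [hfe, Finset.sum_congr rfl (fun i _ => hfs i), Finset.sum_neg_distrib]
    ring
  rw [add_comm, hsum2]
  simp only [f, hBset]
  rfl
end

section
/- If X is a jointly exclusive non-negative random vector with the additional property that P(X_i > 0, X_j > 0) = 0 for all pairs i < j (mutual exclusivity), then its CDF on [0,infinity)^n equals the Fréchet lower bound: F_N(x) = sum_i F_i(x_i) - (n-1) for x in the non-negative orthant (and this quantity is non-negative there). -/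
open MeasureTheory

theorem stmt9 {Ω : Type*} [MeasurableSpace Ω] (μ : Measure Ω) [IsProbabilityMeasure μ]
    (n : ℕ) (hn : 2 ≤ n) (X : Fin n → Ω → ℝ) (hmeas : ∀ i, Measurable (X i))
    (hnonneg : ∀ᵐ ω ∂μ, ∀ i, 0 ≤ X i ω)
    (hJE : μ {ω | ∀ i, 0 < X i ω} = 0)
    (hME : ∀ i j : Fin n, i < j → μ {ω | 0 < X i ω ∧ 0 < X j ω} = 0)
    (x : Fin n → ℝ) (hx : ∀ i, 0 ≤ x i) :
    (μ {ω | ∀ i, X i ω ≤ x i}).toReal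
      = (∑ i, (μ {ω | X i ω ≤ x i}).toReal) - ((n : ℝ) - 1) ∧
    0 ≤ (∑ i, (μ {ω | X i ω ≤ x i}).toReal) - ((n : ℝ) - 1) := by
  classical
  set A : Fin n → Set Ω := fun i => {ω | x i < X i ω} with hA
  have hAmeas : ∀ i, MeasurableSet (A i) := fun i =>
    measurableSet_lt measurable_const (hmeas i)
  have hdisj : Pairwise (Function.onFun (MeasureTheory.AEDisjoint μ) A) := by
    intro i j hij
    rcases lt_or_gt_of_ne hij with h | h
    · refine measure_mono_null ?_ (hME i j h)
      rintro ω ⟨h1, h2⟩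
      exact ⟨lt_of_le_of_lt (hx i) h1, lt_of_le_of_lt (hx j) h2⟩
    · refine measure_mono_null ?_ (hME j i h)
      rintro ω ⟨h1, h2⟩
      exact ⟨lt_of_le_of_lt (hx j) h2, lt_of_le_of_lt (hx i) h1⟩
  have hU : μ (⋃ i, A i) = ∑ i, μ (A i) := by
    rw [measure_iUnion₀ hdisj (fun i => (hAmeas i).nullMeasurableSet)]
    exact tsum_fintype _
  have hcompl : {ω | ∀ i, X i ω ≤ x i} = (⋃ i, A i)ᶜ := by
    ext ω; simp [hA, not_lt]
  have key : μ {ω | ∀ i, X i ω ≤ x i} = 1 - μ (⋃ i, A i) := by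
    rw [hcompl, measure_compl (MeasurableSet.iUnion hAmeas) (measure_ne_top μ _),
      measure_univ]
  have hFi : ∀ i, μ {ω | X i ω ≤ x i} = 1 - μ (A i) := by
    intro i
    have h1 : {ω | X i ω ≤ x i} = (A i)ᶜ := by ext ω; simp [hA, not_lt]
    rw [h1, measure_compl (hAmeas i) (measure_ne_top μ _), measure_univ]
  have hle1 : μ (⋃ i, A i) ≤ 1 := prob_le_one
  have hAle1 : ∀ i, μ (A i) ≤ 1 := fun i => prob_le_one
  have hsum : (μ (⋃ i, A i)).toReal = ∑ i, (μ (A i)).toReal := by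
    rw [hU, ENNReal.toReal_sum (fun i _ => measure_ne_top μ _)]
  have hkeyR : (μ {ω | ∀ i, X i ω ≤ x i}).toReal = 1 - ∑ i, (μ (A i)).toReal := by
    rw [key, ENNReal.toReal_sub_of_le hle1 ENNReal.one_ne_top, ← hsum]
    simp
  have hFiR : ∀ i, (μ {ω | X i ω ≤ x i}).toReal = 1 - (μ (A i)).toReal := by
    intro i
    rw [hFi i, ENNReal.toReal_sub_of_le (hAle1 i) ENNReal.one_ne_top]
    simp
  have hsumR : ∑ i, (μ {ω | X i ω ≤ x i}).toReal
      = (n : ℝ) - ∑ i, (μ (A i)).toReal := by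
    simp [hFiR, Finset.sum_sub_distrib]
  constructor
  · rw [hkeyR, hsumR]; ring
  · rw [hsumR]
    have h1 : ∑ i, (μ (A i)).toReal ≤ 1 := by
      rw [← hsum]
      exact ENNReal.toReal_le_of_le_ofReal one_pos.le (by simpa using hle1)
    linarith
end

section
/- Let n = 3 and q_1,q_2,q_3 in [0,1] with q_1+q_2+q_3 <= 2. For lambda in [0,1] define p_I(lambda) = lambda * min_{i in I} q_i + (1-lambda) * max(q_i + q_j - 1, 0) for I = {i,j}. Then there exists lambda* in [0,1] such that sum_{I containing i} p_I(lambda*) <= q_i for each i in {1,2,3} and sum_I p_I(lambda*) >= q_1+q_2+q_3 - 1. -/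
theorem stmt11 (q1 q2 q3 : ℝ) (h1 : q1 ∈ Set.Icc (0 : ℝ) 1) (h2 : q2 ∈ Set.Icc (0 : ℝ) 1)
    (h3 : q3 ∈ Set.Icc (0 : ℝ) 1) (hsum : q1 + q2 + q3 ≤ 2) :
    ∃ lam : ℝ, lam ∈ Set.Icc (0 : ℝ) 1 ∧
      (lam * min q1 q2 + (1 - lam) * max (q1 + q2 - 1) 0)
        + (lam * min q1 q3 + (1 - lam) * max (q1 + q3 - 1) 0) ≤ q1 ∧
      (lam * min q1 q2 + (1 - lam) * max (q1 + q2 - 1) 0)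
        + (lam * min q2 q3 + (1 - lam) * max (q2 + q3 - 1) 0) ≤ q2 ∧
      (lam * min q1 q3 + (1 - lam) * max (q1 + q3 - 1) 0)
        + (lam * min q2 q3 + (1 - lam) * max (q2 + q3 - 1) 0) ≤ q3 ∧
      q1 + q2 + q3 - 1 ≤
        (lam * min q1 q2 + (1 - lam) * max (q1 + q2 - 1) 0)
          + (lam * min q1 q3 + (1 - lam) * max (q1 + q3 - 1) 0)
          + (lam * min q2 q3 + (1 - lam) * max (q2 + q3 - 1) 0) := by
  obtain ⟨h10, h11⟩ := h1
  obtain ⟨h20, h21⟩ := h2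
  obtain ⟨h30, h31⟩ := h3
  set m12 := min q1 q2 with hm12
  set m13 := min q1 q3 with hm13
  set m23 := min q2 q3 with hm23
  set M12 := max (q1 + q2 - 1) 0 with hM12
  set M13 := max (q1 + q3 - 1) 0 with hM13
  set M23 := max (q2 + q3 - 1) 0 with hM23
  have hm12a : m12 ≤ q1 := min_le_left _ _
  have hm12b : m12 ≤ q2 := min_le_right _ _
  have hm13a : m13 ≤ q1 := min_le_left _ _
  have hm13b : m13 ≤ q3 := min_le_right _ _
  have hm23a : m23 ≤ q2 := min_le_left _ _
  have hm23b : m23 ≤ q3 := min_le_right _ _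
  have hM12a : q1 + q2 - 1 ≤ M12 := le_max_left _ _
  have hM13a : q1 + q3 - 1 ≤ M13 := le_max_left _ _
  have hM23a : q2 + q3 - 1 ≤ M23 := le_max_left _ _
  have hM12b : 0 ≤ M12 := le_max_right _ _
  have hM13b : 0 ≤ M13 := le_max_right _ _
  have hM23b : 0 ≤ M23 := le_max_right _ _
  have hMm12 : M12 ≤ m12 := by
    rcases max_cases (q1 + q2 - 1) 0 with ⟨e, he⟩ | ⟨e, he⟩ <;>
      rw [hM12, e, hm12, le_min_iff] <;> exact ⟨by linarith, by linarith⟩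
  have hMm13 : M13 ≤ m13 := by
    rcases max_cases (q1 + q3 - 1) 0 with ⟨e, he⟩ | ⟨e, he⟩ <;>
      rw [hM13, e, hm13, le_min_iff] <;> exact ⟨by linarith, by linarith⟩
  have hMm23 : M23 ≤ m23 := by
    rcases max_cases (q2 + q3 - 1) 0 with ⟨e, he⟩ | ⟨e, he⟩ <;>
      rw [hM23, e, hm23, le_min_iff] <;> exact ⟨by linarith, by linarith⟩
  -- A ≥ S - 1
  have hA : q1 + q2 + q3 - 1 ≤ m12 + m13 + m23 := by
    rcases le_total q1 q2 with h | h <;> rcases le_total q1 q3 with h' | h' <;>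
      rcases le_total q2 q3 with h'' | h'' <;>
      simp [hm12, hm13, hm23, min_eq_left, min_eq_right, h, h', h''] <;> linarith
  -- case 1 upper bound facts for λ = 0
  have hU1 : M12 + M13 ≤ q1 := by
    rcases max_cases (q1 + q2 - 1) 0 with ⟨e, _⟩ | ⟨e, _⟩ <;>
      rcases max_cases (q1 + q3 - 1) 0 with ⟨e', _⟩ | ⟨e', _⟩ <;>
      rw [hM12, hM13, e, e'] <;> linarith
  have hU2 : M12 + M23 ≤ q2 := by
    rcases max_cases (q1 + q2 - 1) 0 with ⟨e, _⟩ | ⟨e, _⟩ <;>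
      rcases max_cases (q2 + q3 - 1) 0 with ⟨e', _⟩ | ⟨e', _⟩ <;>
      rw [hM12, hM23, e, e'] <;> linarith
  have hU3 : M13 + M23 ≤ q3 := by
    rcases max_cases (q1 + q3 - 1) 0 with ⟨e, _⟩ | ⟨e, _⟩ <;>
      rcases max_cases (q2 + q3 - 1) 0 with ⟨e', _⟩ | ⟨e', _⟩ <;>
      rw [hM13, hM23, e, e'] <;> linarith
  by_cases hB : q1 + q2 + q3 - 1 ≤ M12 + M13 + M23
  · exact ⟨0, ⟨le_refl 0, zero_le_one⟩, by linarith, by linarith, by linarith, by linarith⟩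
  · push_neg at hB
    have hAB : M12 + M13 + M23 < m12 + m13 + m23 := lt_of_lt_of_le hB hA
    have hden : (0 : ℝ) < m12 + m13 + m23 - (M12 + M13 + M23) := by linarith
    set lam := (q1 + q2 + q3 - 1 - (M12 + M13 + M23)) / (m12 + m13 + m23 - (M12 + M13 + M23))
      with hlam
    have hl0 : 0 ≤ lam := div_nonneg (by linarith) (le_of_lt hden)
    have hl1 : lam ≤ 1 := by
      rw [hlam, div_le_one hden]; linarith
    have hkey : lam * (m12 + m13 + m23 - (M12 + M13 + M23))
        = q1 + q2 + q3 - 1 - (M12 + M13 + M23) := by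
      rw [hlam, div_mul_cancel₀]; exact ne_of_gt hden
    -- total sum equals S - 1
    have htot : lam * m12 + (1 - lam) * M12 + (lam * m13 + (1 - lam) * M13)
        + (lam * m23 + (1 - lam) * M23) = q1 + q2 + q3 - 1 := by
      linear_combination hkey
    have hl1' : (0 : ℝ) ≤ 1 - lam := by linarith
    have hq12 : q1 + q2 - 1 ≤ m12 := le_min (by linarith) (by linarith)
    have hq13 : q1 + q3 - 1 ≤ m13 := le_min (by linarith) (by linarith)
    have hq23 : q2 + q3 - 1 ≤ m23 := le_min (by linarith) (by linarith)
    have hp12 : q1 + q2 - 1 ≤ lam * m12 + (1 - lam) * M12 := by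
      calc q1 + q2 - 1 = lam * (q1 + q2 - 1) + (1 - lam) * (q1 + q2 - 1) := by ring
        _ ≤ lam * m12 + (1 - lam) * M12 :=
          add_le_add (mul_le_mul_of_nonneg_left hq12 hl0)
            (mul_le_mul_of_nonneg_left hM12a hl1')
    have hp13 : q1 + q3 - 1 ≤ lam * m13 + (1 - lam) * M13 := by
      calc q1 + q3 - 1 = lam * (q1 + q3 - 1) + (1 - lam) * (q1 + q3 - 1) := by ring
        _ ≤ lam * m13 + (1 - lam) * M13 :=
          add_le_add (mul_le_mul_of_nonneg_left hq13 hl0)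
            (mul_le_mul_of_nonneg_left hM13a hl1')
    have hp23 : q2 + q3 - 1 ≤ lam * m23 + (1 - lam) * M23 := by
      calc q2 + q3 - 1 = lam * (q2 + q3 - 1) + (1 - lam) * (q2 + q3 - 1) := by ring
        _ ≤ lam * m23 + (1 - lam) * M23 :=
          add_le_add (mul_le_mul_of_nonneg_left hq23 hl0)
            (mul_le_mul_of_nonneg_left hM23a hl1')
    exact ⟨lam, ⟨hl0, hl1⟩, by linarith, by linarith, by linarith, by linarith⟩
end
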